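/- Chen's lemma: let λ : ({+,-,0}^n \ {0}, ⪯) → Q_{n-1} be an order-preserving Z₂-map (i.e., λ(-x) = -λ(x), and x ⪯ y implies λ(x) ≤_{Q_{n-1}} λ(y) and λ(x) + λ(y) ≠ 0). Suppose there is γ ∈ [n] such that whenever x ≺ y, at most one of |λ(x)|, |λ(y)| equals γ. Then there exist chains x₁ ⪯ ⋯ ⪯ xₙ and y₁ ⪯ ⋯ ⪯ yₙ with λ(x_i) = (-1)^i i for all i, λ(y_i) = (-1)^i i for all i ≠ γ, and x_γ = -y_γ. -/
import Mathlib


open Finset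

/-- The partial order `⪯` on sign vectors: `x ⪯ y` iff every nonzero coordinate
of `x` agrees with `y`. -/
def SignLe {n : ℕ} (x y : Fin n → SignType) : Prop :=
  ∀ i, x i ≠ 0 → x i = y i

namespace Chen

instance {n : ℕ} (x y : Fin n → SignType) : Decidable (SignLe x y) := by
  unfold SignLe; infer_instance

variable {n : ℕ}

def supp (x : Fin n → SignType) : Finset (Fin n) := univ.filter (x · ≠ 0)

lemma mem_supp {x : Fin n → SignType} {j : Fin n} : j ∈ supp x ↔ x j ≠ 0 := by
  simp [supp]

lemma sle_refl (x : Fin n → SignType) : SignLe x x := fun _ _ => rfl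

lemma sle_trans {x y z : Fin n → SignType} (h1 : SignLe x y) (h2 : SignLe y z) :
    SignLe x z := by
  intro i hi
  rw [h1 i hi]
  exact h2 i (by rw [← h1 i hi]; exact hi)

lemma supp_subset {x y : Fin n → SignType} (h : SignLe x y) : supp x ⊆ supp y := by
  intro j hj
  rw [mem_supp] at *
  rw [← h j hj]; exact hj

lemma sle_eq_of_supp {x y : Fin n → SignType} (h : SignLe x y) (hs : supp y ⊆ supp x) :
    x = y := by
  funext j
  by_cases hj : x j = 0
  · by_cases hyj : y j = 0
    · rw [hj, hyj]
    · exact absurd (hs (mem_supp.2 hyj)) (by simp [mem_supp, hj])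
  · exact h j hj

lemma ssize_lt {x y : Fin n → SignType} (h : SignLe x y) (hne : x ≠ y) :
    (supp x).card < (supp y).card := by
  apply Finset.card_lt_card
  refine ⟨supp_subset h, fun hs => hne (sle_eq_of_supp h hs)⟩

lemma sle_neg {x y : Fin n → SignType} (h : SignLe x y) :
    SignLe (fun i => -x i) (fun i => -y i) := by
  intro i hi
  have hx : x i ≠ 0 := fun h0 => hi (by simp [h0])
  simp only [h i hx]

lemma st_neg_eq_zero : ∀ a : SignType, -a = 0 ↔ a = 0 := by decide

lemma supp_neg (x : Fin n → SignType) : supp (fun i => -x i) = supp x := by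
  ext j
  simp only [mem_supp, ne_eq, st_neg_eq_zero]

section Chunk2
variable {n : ℕ}

abbrev PP (n : ℕ) := {x : Fin n → SignType // x ≠ 0}

def SC {m : ℕ} (c : Fin m → PP n) : Prop :=
  ∀ p q : Fin m, p < q → SignLe (c p).1 (c q).1 ∧ c p ≠ c q

def InE (k : ℕ) (x : PP n) : Prop := ∀ j : Fin n, x.1 j ≠ 0 → (j : ℕ) < k

instance {m : ℕ} (c : Fin m → PP n) : Decidable (SC c) := by unfold SC; infer_instance

instance (k : ℕ) (x : PP n) : Decidable (InE k x) := by unfold InE; infer_instance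

lemma gap_mono {m : ℕ} (f : Fin m → ℕ) (hf : ∀ p q : Fin m, p < q → f p < f q) :
    ∀ r : ℕ, ∀ p q : Fin m, (q : ℕ) = (p : ℕ) + r → f p + r ≤ f q := by
  intro r
  induction r with
  | zero => intro p q h; have hpq : p = q := Fin.ext (by omega); simp [hpq]
  | succ r ih =>
    intro p q h
    have hq' : (p : ℕ) + r < m := by omega
    have h1 := ih p ⟨(p : ℕ) + r, hq'⟩ rfl
    have h2 : f ⟨(p : ℕ) + r, hq'⟩ < f q := hf _ _ (by rw [Fin.lt_def]; simp only [Fin.val_mk]; omega)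
    omega

lemma pinch {m : ℕ} (f : Fin m → ℕ) (hf : ∀ p q : Fin m, p < q → f p < f q)
    (h1 : ∀ p, 1 ≤ f p) (h2 : ∀ p, f p ≤ m) : ∀ p : Fin m, f p = (p : ℕ) + 1 := by
  intro p
  have hm : 0 < m := p.pos
  have hlow := gap_mono f hf (p : ℕ) ⟨0, hm⟩ p (by simp)
  have hplt := p.isLt
  have hhigh := gap_mono f hf (m - 1 - (p : ℕ)) p ⟨m - 1, by omega⟩
    (by simp only [Fin.val_mk]; omega)
  have := h1 ⟨0, hm⟩
  have := h2 ⟨m - 1, by omega⟩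
  omega

lemma ssize_full {m : ℕ} (c : Fin m → PP n) (hc : SC c) (hE : ∀ j, InE m (c j)) :
    ∀ p : Fin m, (Chen.supp (c p).1).card = (p : ℕ) + 1 := by
  apply pinch
  · intro p q hpq
    exact Chen.ssize_lt (hc p q hpq).1 (fun h => (hc p q hpq).2 (Subtype.ext h))
  · intro p
    have : (c p).1 ≠ 0 := (c p).2
    rw [Function.ne_iff] at this
    obtain ⟨j, hj⟩ := this
    have : j ∈ Chen.supp (c p).1 := Chen.mem_supp.2 (by simpa using hj)
    exact Finset.card_pos.2 ⟨j, this⟩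
  · intro p
    have hsub : Chen.supp (c p).1 ⊆ Finset.univ.filter (fun j : Fin n => (j : ℕ) < m) := by
      intro j hj
      simp only [Finset.mem_filter, Finset.mem_univ, true_and]
      exact hE p j (Chen.mem_supp.1 hj)
    calc (Chen.supp (c p).1).card ≤ _ := Finset.card_le_card hsub
      _ ≤ (Finset.range m).card := Finset.card_le_card_of_injOn (fun j => (j : ℕ))
          (by intro a ha; simp at ha ⊢; exact ha)
          (by intro a _ b _ h; exact Fin.val_injective h)
      _ = m := Finset.card_range m

lemma invol_parity {α : Type*} [DecidableEq α] (s : Finset α) (g : α → α)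
    (hmem : ∀ x ∈ s, g x ∈ s) (hinv : ∀ x ∈ s, g (g x) = x) :
    s.card ≡ (s.filter (fun x => g x = x)).card [MOD 2] := by
  classical
  have hsum : ∑ _x ∈ s.filter (fun x => ¬ g x = x), (1 : ZMod 2) = 0 := by
    apply Finset.sum_involution (fun a _ => g a)
    · intro a _; decide
    · intro a ha _
      simp only [Finset.mem_filter] at ha
      exact fun h => ha.2 h
    · intro a ha
      simp only [Finset.mem_filter] at ha ⊢
      refine ⟨hmem a ha.1, fun h => ha.2 ?_⟩
      rw [hinv a ha.1] at h
      exact h.symm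
    · intro a ha
      simp only [Finset.mem_filter] at ha
      exact hinv a ha.1
  have hcard : (((s.filter (fun x => ¬ g x = x)).card : ZMod 2)) = 0 := by
    rw [← hsum]
    simp
  have hdvd : 2 ∣ (s.filter (fun x => ¬ g x = x)).card := by
    rwa [ZMod.natCast_eq_zero_iff] at hcard
  obtain ⟨k, hk⟩ := hdvd
  have hsplit := Finset.card_filter_add_card_filter_not (s := s) (p := fun x => g x = x)
  unfold Nat.ModEq
  omega

end Chunk2
section Chunk3

variable {m : ℕ}

def NAseq {r : ℕ} (w : Fin r → ℤ) : Prop :=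
  (∀ p q : Fin r, p < q → |w p| < |w q|) ∧ (∀ p : Fin r, w p < 0 ↔ Even (p : ℕ))

def PAseq {r : ℕ} (w : Fin r → ℤ) : Prop :=
  (∀ p q : Fin r, p < q → |w p| < |w q|) ∧ (∀ p : Fin r, w p < 0 ↔ Odd (p : ℕ))

instance {r : ℕ} (w : Fin r → ℤ) : Decidable (NAseq w) := by unfold NAseq; infer_instance

lemma succAbove_val (i : Fin (m+1)) (j : Fin m) :
    ((i.succAbove j : Fin (m+1)) : ℕ) = if (j : ℕ) < (i : ℕ) then (j : ℕ) else (j : ℕ) + 1 := by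
  rcases Nat.lt_or_ge (j : ℕ) (i : ℕ) with h | h
  · rw [if_pos h, Fin.succAbove, if_pos (by rw [Fin.lt_def, Fin.coe_castSucc]; exact h)]
    exact Fin.coe_castSucc j
  · rw [if_neg (by omega), Fin.succAbove, if_neg (by rw [Fin.lt_def, Fin.coe_castSucc]; omega)]
    exact Fin.val_succ j

variable {v : Fin (m+1) → ℤ}

lemma sign_slot_lt {i q : Fin (m+1)} (hNA : NAseq (v ∘ i.succAbove))
    (h : (q : ℕ) < (i : ℕ)) : (v q < 0 ↔ Even (q : ℕ)) := by
  have hq : (q : ℕ) < m := by have := i.isLt; omega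
  have key : i.succAbove ⟨(q : ℕ), hq⟩ = q := by
    apply Fin.ext
    rw [succAbove_val]
    simp [h]
  have := hNA.2 ⟨(q : ℕ), hq⟩
  simpa [Function.comp, key] using this

lemma sign_slot_gt {i q : Fin (m+1)} (hNA : NAseq (v ∘ i.succAbove))
    (h : (i : ℕ) < (q : ℕ)) : (v q < 0 ↔ Odd (q : ℕ)) := by
  have hq : (q : ℕ) - 1 < m := by have := q.isLt; omega
  have key : i.succAbove ⟨(q : ℕ) - 1, hq⟩ = q := by
    apply Fin.ext
    rw [succAbove_val]
    simp only [Fin.val_mk]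
    rw [if_neg (by omega)]
    omega
  have h2 := hNA.2 ⟨(q : ℕ) - 1, hq⟩
  rw [show ((⟨(q:ℕ)-1, hq⟩ : Fin m) : ℕ) = (q:ℕ) - 1 from rfl] at h2
  simp only [Function.comp, key] at h2
  rw [h2, Nat.even_iff, Nat.odd_iff]
  omega

lemma adj_of_two (hv1 : ∀ p, v p ≠ 0) {i j : Fin (m+1)} (hij : i < j)
    (hi : NAseq (v ∘ i.succAbove)) (hj : NAseq (v ∘ j.succAbove)) : (j : ℕ) = (i : ℕ) + 1 := by
  by_contra hne
  have hq : (i : ℕ) + 1 < m + 1 := by have := j.isLt; rw [Fin.lt_def] at hij; omega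
  set q : Fin (m+1) := ⟨(i : ℕ) + 1, hq⟩ with hqdef
  have h1 : v q < 0 ↔ Odd (q : ℕ) := sign_slot_gt hi (by simp [hqdef])
  have h2 : v q < 0 ↔ Even (q : ℕ) := sign_slot_lt hj (by simp [hqdef]; rw [Fin.lt_def] at hij; omega)
  have := hv1 q
  rcases lt_trichotomy (v q) 0 with h | h | h
  · have o := h1.1 h; have e := h2.1 h
    rw [Nat.odd_iff] at o; rw [Nat.even_iff] at e; omega
  · exact this h
  · have o := h1.not.1 (by omega); have e := h2.not.1 (by omega)
    rw [Nat.odd_iff] at o; rw [Nat.even_iff] at e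
    simp at o e; omega

lemma three_del (hv1 : ∀ p, v p ≠ 0) {a b c : Fin (m+1)}
    (ha : NAseq (v ∘ a.succAbove)) (hb : NAseq (v ∘ b.succAbove)) (hc : NAseq (v ∘ c.succAbove))
    (hab : a ≠ b) (hac : a ≠ c) (hbc : b ≠ c) : False := by
  have key : ∀ x y : Fin (m+1), x < y → NAseq (v ∘ x.succAbove) → NAseq (v ∘ y.succAbove) →
      (y : ℕ) = (x : ℕ) + 1 := fun x y h hx hy => adj_of_two hv1 h hx hy
  rcases lt_trichotomy a b with h1 | h1 | h1
  · rcases lt_trichotomy b c with h2 | h2 | h2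
    · have := key a b h1 ha hb; have := key b c h2 hb hc; have := key a c (h1.trans h2) ha hc; omega
    · exact hbc h2
    · rcases lt_trichotomy a c with h3 | h3 | h3
      · have := key a c h3 ha hc; have := key c b h2 hc hb; have := key a b h1 ha hb; omega
      · exact hac h3
      · have := key c a h3 hc ha; have := key a b h1 ha hb; have := key c b (h3.trans h1) hc hb; omega
  · exact hab h1
  · rcases lt_trichotomy a c with h2 | h2 | h2
    · have := key b a h1 hb ha; have := key a c h2 ha hc; have := key b c (h1.trans h2) hb hc; omega
    · exact hac h2
    · rcases lt_trichotomy b c with h3 | h3 | h3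
      · have := key b c h3 hb hc; have := key c a h2 hc ha; have := key b a h1 hb ha; omega
      · exact hbc h3
      · have := key c b h3 hc hb; have := key b a h1 hb ha; have := key c a (h3.trans h1) hc ha; omega

end Chunk3
section Chunk4

variable {m : ℕ} {v : Fin (m+1) → ℤ}

lemma sign_mod_contra {a b : ℤ} (ha : a ≠ 0) (hsame : a < 0 ↔ b < 0) {P Q : Prop}
    (h1 : a < 0 ↔ P) (h2 : b < 0 ↔ Q) (hPQ : ¬(P ↔ Q)) : False := by
  rcases lt_trichotomy a 0 with h | h | h
  · exact hPQ (iff_of_true (h1.1 h) (h2.1 (hsame.1 h)))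
  · exact ha h
  · have hna : ¬ a < 0 := by omega
    exact hPQ (iff_of_false (fun c => hna (h1.2 c)) (fun c => hna (hsame.2 (h2.2 c))))

lemma even_odd_contra {a : ℤ} (ha : a ≠ 0) {P Q : Prop}
    (h1 : a < 0 ↔ P) (h2 : a < 0 ↔ Q) (hPQ : ¬(P ↔ Q)) : False :=
  sign_mod_contra ha Iff.rfl h1 h2 hPQ

lemma const_block (hv2 : ∀ p q : Fin (m+1), p < q → v p = v q ∨ |v p| < |v q|)
    {p q : Fin (m+1)} (hpq : p < q) (heq : v p = v q) :
    ∀ r : Fin (m+1), p ≤ r → r ≤ q → v r = v p := by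
  intro r h1 h2
  rcases eq_or_lt_of_le h1 with h | h
  · rw [← h]
  rcases eq_or_lt_of_le h2 with h' | h'
  · rw [h', heq]
  rcases hv2 p r h with he | habs
  · exact he.symm
  rcases hv2 r q h' with he | habs'
  · rw [he, heq]
  rw [← heq] at habs'
  omega

lemma del_eq_of_block (hv2 : ∀ p q : Fin (m+1), p < q → v p = v q ∨ |v p| < |v q|)
    {p q : Fin (m+1)} (hpq : p < q) (heq : v p = v q) :
    v ∘ p.succAbove = v ∘ q.succAbove := by
  have hpq' : (p : ℕ) < (q : ℕ) := Fin.lt_def.1 hpq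
  funext t
  simp only [Function.comp]
  rcases Nat.lt_or_ge (t : ℕ) (p : ℕ) with h | h
  · congr 1
    apply Fin.ext
    rw [succAbove_val, succAbove_val, if_pos h, if_pos (by omega)]
  rcases Nat.lt_or_ge (t : ℕ) (q : ℕ) with h' | h'
  · have e1 : ((p.succAbove t) : ℕ) = (t : ℕ) + 1 := by rw [succAbove_val, if_neg (by omega)]
    have e2 : ((q.succAbove t) : ℕ) = (t : ℕ) := by rw [succAbove_val, if_pos h']
    have b1 := const_block hv2 hpq heq (p.succAbove t)
      (by rw [Fin.le_def, e1]; omega) (by rw [Fin.le_def, e1]; omega)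
    have b2 := const_block hv2 hpq heq (q.succAbove t)
      (by rw [Fin.le_def, e2]; omega) (by rw [Fin.le_def, e2]; omega)
    rw [b1, b2]
  · congr 1
    apply Fin.ext
    rw [succAbove_val, succAbove_val, if_neg (by omega), if_neg (by omega)]

lemma alt_pattern (hv1 : ∀ p, v p ≠ 0)
    (halt : ∀ p : Fin (m+1), (h : (p : ℕ) + 1 < m + 1) → (v p < 0 ↔ ¬ v ⟨(p : ℕ) + 1, h⟩ < 0)) :
    (∀ p : Fin (m+1), v p < 0 ↔ Even (p : ℕ)) ∨ (∀ p : Fin (m+1), v p < 0 ↔ Odd (p : ℕ)) := by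
  have key : ∀ r (hr : r < m + 1), (v ⟨r, hr⟩ < 0 ↔ (v 0 < 0 ↔ Even r)) := by
    intro r
    induction r with
    | zero =>
      intro hr
      have : (⟨0, hr⟩ : Fin (m+1)) = 0 := rfl
      rw [this]
      simp
    | succ r ih =>
      intro hr
      have h1 := halt ⟨r, by omega⟩ (by simpa using hr)
      simp only [Fin.val_mk] at h1
      have h2 := ih (by omega)
      rw [Nat.even_add_one]
      constructor
      · intro hneg
        have hr0 : ¬ v ⟨r, by omega⟩ < 0 := fun c => (h1.1 c) hneg
        rw [h2] at hr0
        tauto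
      · intro hiff
        by_contra hc
        have hr0 : v ⟨r, by omega⟩ < 0 := by
          rw [h1]
          exact hc
        rw [h2] at hr0
        tauto
  by_cases h0 : v 0 < 0
  · left
    intro p
    have hk := key (p : ℕ) p.isLt
    rw [Fin.eta] at hk
    rw [hk]
    simp [h0]
  · right
    intro p
    have hk := key (p : ℕ) p.isLt
    rw [Fin.eta] at hk
    rw [hk]
    simp [h0]

lemma NAdel_of_NA (hNA : NAseq v) : NAseq (v ∘ (Fin.last m).succAbove) := by
  rw [Fin.succAbove_last]
  constructor
  · intro p q h
    exact hNA.1 _ _ (by rwa [Fin.castSucc_lt_castSucc_iff])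
  · intro p
    have := hNA.2 p.castSucc
    simpa using this

lemma NA_uniq_of_NA (hv1 : ∀ p, v p ≠ 0) (hNA : NAseq v) {j : Fin (m+1)}
    (hj : NAseq (v ∘ j.succAbove)) : j = Fin.last m := by
  by_contra hne
  have hlt : (j : ℕ) < m := by
    have h1 := j.isLt
    rcases Nat.lt_or_ge (j : ℕ) m with h | h
    · exact h
    · exact absurd (Fin.ext (by simp [Fin.last]; omega) : j = Fin.last m) hne
  set q : Fin (m+1) := ⟨(j : ℕ) + 1, by omega⟩ with hq
  have h1 : v q < 0 ↔ Odd (q : ℕ) := sign_slot_gt hj (by simp [hq])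
  have h2 : v q < 0 ↔ Even (q : ℕ) := hNA.2 q
  exact even_odd_contra (hv1 q) h1 h2 (by rw [Nat.even_iff, Nat.odd_iff]; omega)

lemma NAdel_of_PA (hPA : PAseq v) : NAseq (v ∘ (0 : Fin (m+1)).succAbove) := by
  constructor
  · intro p q h
    exact hPA.1 _ _ (Fin.strictMono_succAbove _ h)
  · intro p
    have h0 : (0 : Fin (m+1)).succAbove p = p.succ := rfl
    have := hPA.2 p.succ
    rw [Fin.val_succ] at this
    simp only [Function.comp, h0]
    rw [this, Nat.odd_iff, Nat.even_iff]
    omega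

lemma NA_uniq_of_PA (hv1 : ∀ p, v p ≠ 0) (hPA : PAseq v) {j : Fin (m+1)}
    (hj : NAseq (v ∘ j.succAbove)) : j = 0 := by
  by_contra hne
  have hpos : (0 : ℕ) < (j : ℕ) := by
    rcases Nat.eq_zero_or_pos (j : ℕ) with h | h
    · exact absurd (Fin.ext (by simp [h]) : j = 0) hne
    · exact h
  have h1 : v 0 < 0 ↔ Even ((0 : Fin (m+1)) : ℕ) := sign_slot_lt hj (by simpa using hpos)
  have h2 : v 0 < 0 ↔ Odd ((0 : Fin (m+1)) : ℕ) := hPA.2 0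
  exact even_odd_contra (hv1 0) h1 h2 (by rw [Nat.even_iff, Nat.odd_iff]; simp)

lemma alt_of_unique (hv1 : ∀ p, v p ≠ 0)
    (hv2 : ∀ p q : Fin (m+1), p < q → v p = v q ∨ |v p| < |v q|)
    {i : Fin (m+1)} (hi : NAseq (v ∘ i.succAbove))
    (huniq : ∀ j, NAseq (v ∘ j.succAbove) → j = i) : NAseq v ∨ PAseq v := by
  by_cases hstrict : ∀ p q : Fin (m+1), p < q → |v p| < |v q|
  · by_cases halt : ∀ p : Fin (m+1), (h : (p : ℕ) + 1 < m + 1) → (v p < 0 ↔ ¬ v ⟨(p : ℕ) + 1, h⟩ < 0)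
    · rcases alt_pattern hv1 halt with h | h
      · exact Or.inl ⟨hstrict, h⟩
      · exact Or.inr ⟨hstrict, h⟩
    · exfalso
      obtain ⟨p, hrest⟩ := not_forall.1 halt
      obtain ⟨hp, hsign⟩ := not_forall.1 hrest
      set p' : Fin (m+1) := ⟨(p : ℕ) + 1, hp⟩ with hp'def
      have hsame : v p < 0 ↔ v p' < 0 := not_iff_not.1 (not_iff.1 hsign)
      have hvv : (p' : ℕ) = (p : ℕ) + 1 := rfl
      have hipp : i = p ∨ i = p' := by
        by_contra hc
        push_neg at hc
        have hp_ne : p ≠ i := fun h => hc.1 h.symm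
        have hp'_ne : p' ≠ i := fun h => hc.2 h.symm
        rcases Nat.lt_trichotomy (p : ℕ) (i : ℕ) with h | h | h
        · rcases Nat.lt_trichotomy (p' : ℕ) (i : ℕ) with h' | h' | h'
          · have e1 := sign_slot_lt (q := p) hi h
            have e2 := sign_slot_lt (q := p') hi h'
            exact sign_mod_contra (hv1 p) hsame e1 e2
              (by rw [hvv, Nat.even_iff, Nat.even_iff]; omega)
          · exact hp'_ne (Fin.ext h')
          · omega
        · exact hp_ne (Fin.ext h)
        · have e1 := sign_slot_gt (q := p) hi h
          have e2 := sign_slot_gt (q := p') hi (by omega)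
          exact sign_mod_contra (hv1 p) hsame e1 e2
            (by rw [hvv, Nat.odd_iff, Nat.odd_iff]; omega)
      have hswap : ∀ t : Fin m, v (p'.succAbove t) < 0 ↔ v (p.succAbove t) < 0 := by
        intro t
        rcases Nat.lt_trichotomy (t : ℕ) (p : ℕ) with h | h | h
        · have he : p'.succAbove t = p.succAbove t := Fin.ext
            (by rw [succAbove_val, succAbove_val, if_pos h, if_pos (by rw [hvv]; omega)])
          rw [he]
        · have ha : p'.succAbove t = p := Fin.ext
            (by rw [succAbove_val, if_pos (by rw [hvv]; omega)]; omega)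
          have hb : p.succAbove t = p' := Fin.ext
            (by rw [succAbove_val, if_neg (by omega)]; rw [hvv]; omega)
          rw [ha, hb]
          exact hsame
        · have he : p'.succAbove t = p.succAbove t := Fin.ext
            (by rw [succAbove_val, succAbove_val, if_neg (by rw [hvv]; omega), if_neg (by omega)])
          rw [he]
      rcases hipp with hieq | hieq
      · have hi' : NAseq (v ∘ p.succAbove) := by rw [← hieq]; exact hi
        have hnew : NAseq (v ∘ p'.succAbove) := by
          constructor
          · intro s t hst
            exact hstrict _ _ (Fin.strictMono_succAbove _ hst)
          · intro t
            have base := hi'.2 t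
            simp only [Function.comp] at base ⊢
            rw [hswap t]
            exact base
        have hcol := huniq p' hnew
        have h1 : (p' : ℕ) = (i : ℕ) := congrArg Fin.val hcol
        have h2 : (i : ℕ) = (p : ℕ) := congrArg Fin.val hieq
        omega
      · have hi' : NAseq (v ∘ p'.succAbove) := by rw [← hieq]; exact hi
        have hnew : NAseq (v ∘ p.succAbove) := by
          constructor
          · intro s t hst
            exact hstrict _ _ (Fin.strictMono_succAbove _ hst)
          · intro t
            have base := hi'.2 t
            simp only [Function.comp] at base ⊢
            rw [← hswap t]
            exact base
        have hcol := huniq p hnew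
        have h1 : (p : ℕ) = (i : ℕ) := congrArg Fin.val hcol
        have h2 : (i : ℕ) = (p' : ℕ) := congrArg Fin.val hieq
        omega
  · exfalso
    push_neg at hstrict
    obtain ⟨p, q, hpq, habs⟩ := hstrict
    have heq : v p = v q := (hv2 p q hpq).resolve_right (not_lt.2 habs)
    have hdel := del_eq_of_block hv2 hpq heq
    have hip : i = p ∨ i = q := by
      by_contra hc
      push_neg at hc
      obtain ⟨t1, ht1⟩ := Fin.exists_succAbove_eq (show p ≠ i from fun h => hc.1 h.symm)
      obtain ⟨t2, ht2⟩ := Fin.exists_succAbove_eq (show q ≠ i from fun h => hc.2 h.symm)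
      have ht12 : t1 < t2 := by
        rw [← Fin.succAbove_lt_succAbove_iff (p := i), ht1, ht2]
        exact hpq
      have habs2 := hi.1 t1 t2 ht12
      simp only [Function.comp] at habs2
      rw [ht1, ht2, heq] at habs2
      omega
    rcases hip with rfl | rfl
    · have h2 : NAseq (v ∘ q.succAbove) := by rw [← hdel]; exact hi
      exact hpq.ne' (huniq q h2)
    · have h2 : NAseq (v ∘ p.succAbove) := by rw [hdel]; exact hi
      exact hpq.ne (huniq p h2)

end Chunk4
section Chunk5
variable {n : ℕ}

def Bset (n k : ℕ) : Finset (Fin n) := univ.filter (fun j => (j : ℕ) < k)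

lemma card_Bset {k : ℕ} (hk : k ≤ n) : (Bset n k).card = k := by
  have himg : Bset n k = (univ : Finset (Fin k)).image (Fin.castLE hk) := by
    ext j
    simp only [Bset, mem_filter, mem_univ, true_and, Finset.mem_image]
    constructor
    · intro h
      exact ⟨⟨(j : ℕ), h⟩, Fin.ext rfl⟩
    · rintro ⟨t, -, rfl⟩
      simpa using t.isLt
  rw [himg, Finset.card_image_of_injective _ (Fin.castLE_injective hk), card_univ, Fintype.card_fin]

lemma supp_subset_Bset {k : ℕ} {x : PP n} (hx : InE k x) : Chen.supp x.1 ⊆ Bset n k := by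
  intro j hj
  simp only [Bset, mem_filter, mem_univ, true_and]
  exact hx j (Chen.mem_supp.1 hj)

lemma card_supp_le_of_InE {k : ℕ} (hk : k ≤ n) {x : PP n} (hx : InE k x) :
    (Chen.supp x.1).card ≤ k := by
  calc (Chen.supp x.1).card ≤ (Bset n k).card := Finset.card_le_card (supp_subset_Bset hx)
    _ = k := card_Bset hk

def InM (m : ℕ) (hmn : m < n) (x : PP n) : Prop :=
  InE (m+1) x ∧ x.1 ⟨m, hmn⟩ ≠ SignType.neg

instance (m : ℕ) (hmn : m < n) (x : PP n) : Decidable (InM m hmn x) := by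
  unfold InM; infer_instance

def FFp {m : ℕ} (hmn : m < n) (σ : Fin (m+1) → PP n) : Prop :=
  SC σ ∧ ∀ j, InM m hmn (σ j)

instance {m : ℕ} (hmn : m < n) (σ : Fin (m+1) → PP n) : Decidable (FFp hmn σ) := by
  unfold FFp; infer_instance

variable {m : ℕ} {hmn : m < n}

lemma FFp_ssize {σ : Fin (m+1) → PP n} (h : FFp hmn σ) (j : Fin (m+1)) :
    (Chen.supp (σ j).1).card = (j : ℕ) + 1 :=
  ssize_full σ h.1 (fun p => (h.2 p).1) j

lemma FFp_supp_last {σ : Fin (m+1) → PP n} (h : FFp hmn σ) :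
    Chen.supp (σ (Fin.last m)).1 = Bset n (m+1) := by
  apply Finset.eq_of_subset_of_card_le (supp_subset_Bset (h.2 (Fin.last m)).1)
  rw [card_Bset hmn, FFp_ssize h, Fin.val_last]

lemma eq_last_of_equator {σ : Fin (m+1) → PP n} {i : Fin (m+1)} (hσ : FFp hmn σ)
    (heq : ∀ t : Fin m, InE m (σ (i.succAbove t))) : i = Fin.last m := by
  by_contra hne
  obtain ⟨t, ht⟩ := Fin.exists_succAbove_eq (show Fin.last m ≠ i from fun h => hne h.symm)
  have h1 : (Chen.supp (σ (Fin.last m)).1).card ≤ m := by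
    apply card_supp_le_of_InE (le_of_lt hmn)
    rw [← ht]
    exact heq t
  have h2 := FFp_ssize hσ (Fin.last m)
  rw [Fin.val_last] at h2
  omega

/-- an element determined by its support among those `≤ w` -/
lemma eq_of_supp_eq_of_le {w : Fin n → SignType} {z z' : PP n}
    (hz : SignLe z.1 w) (hz' : SignLe z'.1 w) (hs : Chen.supp z.1 = Chen.supp z'.1) :
    z = z' := by
  apply Subtype.ext
  funext j
  by_cases hj : z.1 j = 0
  · have : z'.1 j = 0 := by
      by_contra hc
      have hmem : j ∈ Chen.supp z.1 := by rw [hs]; exact Chen.mem_supp.2 hc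
      exact (Chen.mem_supp.1 hmem) hj
    rw [hj, this]
  · have hj' : z'.1 j ≠ 0 := by
      have hmem : j ∈ Chen.supp z'.1 := by rw [← hs]; exact Chen.mem_supp.2 hj
      exact Chen.mem_supp.1 hmem
    rw [hz j hj, hz' j hj']

end Chunk5
section Chunk6
variable {n m : ℕ} {hmn : m < n}

lemma SC_le {k : ℕ} {c : Fin k → PP n} (hc : SC c) {p q : Fin k} (hpq : p ≤ q) :
    SignLe (c p).1 (c q).1 := by
  rcases eq_or_lt_of_le hpq with h | h
  · rw [h]; exact Chen.sle_refl _
  · exact (hc p q h).1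

lemma ext_facts_low {σ : Fin (m+1) → PP n} {i : Fin (m+1)} (hi : (i : ℕ) < m) {z : PP n}
    (h : FFp hmn (Function.update σ i z)) :
    SignLe z.1 (σ ⟨(i : ℕ)+1, by omega⟩).1 ∧ (Chen.supp z.1).card = (i : ℕ) + 1 := by
  have hne : (⟨(i : ℕ)+1, by omega⟩ : Fin (m+1)) ≠ i := by
    intro hcon
    have := congrArg Fin.val hcon
    simp at this
  have hsc := h.1 i ⟨(i : ℕ)+1, by omega⟩ (by rw [Fin.lt_def]; simp)
  rw [Function.update_self, Function.update_of_ne hne] at hsc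
  have hcard := FFp_ssize h i
  rw [Function.update_self] at hcard
  exact ⟨hsc.1, hcard⟩

lemma ext_U_low {σ : Fin (m+1) → PP n} {i : Fin (m+1)} (hi : (i : ℕ) < m) {z₀ : PP n}
    (h₀ : FFp hmn (Function.update σ i z₀)) :
    ∃ U : Finset (Fin n), U.card = (i : ℕ) ∧ (∀ p : Fin (m+1), p < i → Chen.supp (σ p).1 ⊆ U) ∧
      (∀ z : PP n, FFp hmn (Function.update σ i z) → U ⊆ Chen.supp z.1) := by
  rcases Nat.eq_zero_or_pos (i : ℕ) with h0 | h0
  · refine ⟨∅, by rw [Finset.card_empty, h0], ?_, fun _ _ => Finset.empty_subset _⟩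
    intro p hp
    exfalso
    rw [Fin.lt_def, h0] at hp
    omega
  · set ip : Fin (m+1) := ⟨(i : ℕ) - 1, by omega⟩ with hip
    have hipne : ip ≠ i := by
      intro hcon
      have := congrArg Fin.val hcon
      simp only [hip, Fin.val_mk] at this
      omega
    have hiplt : ip < i := by rw [Fin.lt_def]; simp only [hip, Fin.val_mk]; omega
    refine ⟨Chen.supp (σ ip).1, ?_, ?_, ?_⟩
    · have := FFp_ssize h₀ ip
      rw [Function.update_of_ne hipne] at this
      rw [this]
      simp only [hip, Fin.val_mk]
      omega
    · intro p hp
      have hple : p ≤ ip := by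
        rw [Fin.le_def]
        simp only [hip, Fin.val_mk]
        rw [Fin.lt_def] at hp
        omega
      rcases eq_or_lt_of_le hple with h | h
      · rw [h]
      · have hsc := h₀.1 p ip h
        rw [Function.update_of_ne (ne_of_lt hp), Function.update_of_ne hipne] at hsc
        exact Chen.supp_subset hsc.1
    · intro z hz
      have hsc := hz.1 ip i hiplt
      rw [Function.update_of_ne hipne, Function.update_self] at hsc
      exact Chen.supp_subset hsc.1

lemma ext_at_most_two_low {σ : Fin (m+1) → PP n} {i : Fin (m+1)} (hi : (i : ℕ) < m)
    {z₁ z₂ z₃ : PP n}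
    (h1 : FFp hmn (Function.update σ i z₁)) (h2 : FFp hmn (Function.update σ i z₂))
    (h3 : FFp hmn (Function.update σ i z₃))
    (h12 : z₁ ≠ z₂) (h13 : z₁ ≠ z₃) (h23 : z₂ ≠ z₃) : False := by
  set w : PP n := σ ⟨(i : ℕ)+1, by omega⟩ with hw
  obtain ⟨U, hUcard, -, hUsub⟩ := ext_U_low hi h1
  have f1 := ext_facts_low hi h1
  have f2 := ext_facts_low hi h2
  have f3 := ext_facts_low hi h3
  have hWcard : (Chen.supp w.1).card = (i : ℕ) + 2 := by
    have hne : (⟨(i : ℕ)+1, by omega⟩ : Fin (m+1)) ≠ i := by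
      intro hcon; have := congrArg Fin.val hcon; simp at this
    have := FFp_ssize h1 ⟨(i : ℕ)+1, by omega⟩
    rw [Function.update_of_ne hne] at this
    rw [hw, this]
  have hUW : U ⊆ Chen.supp w.1 := (hUsub z₁ h1).trans (Chen.supp_subset f1.1)
  have key : ∀ z : PP n, FFp hmn (Function.update σ i z) →
      ∃ a, Chen.supp z.1 \ U = {a} ∧ Chen.supp z.1 = U ∪ {a} ∧ a ∈ Chen.supp w.1 \ U := by
    intro z hz
    have hfz := ext_facts_low hi hz
    have hsub := hUsub z hz
    have hcard1 : (Chen.supp z.1 \ U).card = 1 := by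
      rw [Finset.card_sdiff_of_subset hsub, hfz.2, hUcard]
      omega
    obtain ⟨a, ha⟩ := Finset.card_eq_one.1 hcard1
    refine ⟨a, ha, ?_, ?_⟩
    · rw [← ha, Finset.union_sdiff_of_subset hsub]
    · have : a ∈ Chen.supp z.1 \ U := by rw [ha]; exact Finset.mem_singleton_self a
      rw [Finset.mem_sdiff] at this ⊢
      exact ⟨Chen.supp_subset hfz.1 this.1, this.2⟩
  obtain ⟨a₁, ha₁, hs₁, haw₁⟩ := key z₁ h1
  obtain ⟨a₂, ha₂, hs₂, haw₂⟩ := key z₂ h2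
  obtain ⟨a₃, ha₃, hs₃, haw₃⟩ := key z₃ h3
  have hdet : ∀ {za zb : PP n}, FFp hmn (Function.update σ i za) → FFp hmn (Function.update σ i zb) →
      Chen.supp za.1 = Chen.supp zb.1 → za = zb := by
    intro za zb hza hzb hseq
    exact eq_of_supp_eq_of_le (ext_facts_low hi hza).1 (ext_facts_low hi hzb).1 hseq
  have ha12 : a₁ ≠ a₂ := fun h => h12 (hdet h1 h2 (by rw [hs₁, hs₂, h]))
  have ha13 : a₁ ≠ a₃ := fun h => h13 (hdet h1 h3 (by rw [hs₁, hs₃, h]))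
  have ha23 : a₂ ≠ a₃ := fun h => h23 (hdet h2 h3 (by rw [hs₂, hs₃, h]))
  have htriple : ({a₁, a₂, a₃} : Finset (Fin n)) ⊆ Chen.supp w.1 \ U := by
    intro x hx
    simp only [Finset.mem_insert, Finset.mem_singleton] at hx
    rcases hx with rfl | rfl | rfl
    · exact haw₁
    · exact haw₂
    · exact haw₃
  have hc3 : ({a₁, a₂, a₃} : Finset (Fin n)).card = 3 := by
    rw [Finset.card_insert_of_notMem (by simp [ha12, ha13]),
      Finset.card_insert_of_notMem (by simp [ha23]), Finset.card_singleton]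
  have hc2 : (Chen.supp w.1 \ U).card = 2 := by
    rw [Finset.card_sdiff_of_subset hUW, hWcard, hUcard]
    omega
  have := Finset.card_le_card htriple
  omega

end Chunk6
section Chunk7
variable {n m : ℕ} {hmn : m < n}

lemma st_zero_ne_neg : (0 : SignType) ≠ SignType.neg := by decide

lemma ext_other_low {σ : Fin (m+1) → PP n} {i : Fin (m+1)} (hσ : FFp hmn σ)
    (hi : (i : ℕ) < m) :
    ∃ z' : PP n, z' ≠ σ i ∧ FFp hmn (Function.update σ i z') := by
  have hσupd : FFp hmn (Function.update σ i (σ i)) := by rwa [Function.update_eq_self]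
  obtain ⟨U, hUcard, hUfrom, hUsub⟩ := ext_U_low hi hσupd
  set isucc : Fin (m+1) := ⟨(i : ℕ)+1, by omega⟩ with hisucc
  set w : PP n := σ isucc with hw
  set S : Finset (Fin n) := Chen.supp (σ i).1 with hS
  have hilt : i < isucc := by rw [Fin.lt_def]; simp [hisucc]
  have hUS : U ⊆ S := hUsub (σ i) hσupd
  have hSW : S ⊆ Chen.supp w.1 := Chen.supp_subset (hσ.1 i isucc hilt).1
  have hScard : S.card = (i : ℕ) + 1 := FFp_ssize hσ i
  have hWcard : (Chen.supp w.1).card = (i : ℕ) + 2 := by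
    have := FFp_ssize hσ isucc
    rw [hw, this]
  have hUW : U ⊆ Chen.supp w.1 := hUS.trans hSW
  -- the flipped support element
  have hWScard : (Chen.supp w.1 \ S).card = 1 := by
    rw [Finset.card_sdiff_of_subset hSW, hWcard, hScard]
    omega
  obtain ⟨j₀, hj₀⟩ := Finset.card_eq_one.1 hWScard
  have hj₀mem : j₀ ∈ Chen.supp w.1 \ S := by rw [hj₀]; exact Finset.mem_singleton_self j₀
  rw [Finset.mem_sdiff] at hj₀mem
  have hj₀w : w.1 j₀ ≠ 0 := Chen.mem_supp.1 hj₀mem.1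
  have hj₀S : (σ i).1 j₀ = 0 := by
    by_contra hc
    exact hj₀mem.2 (Chen.mem_supp.2 hc)
  -- define z'
  set zf : Fin n → SignType := fun j => if (σ i).1 j ≠ 0 ∧ j ∉ U then 0 else w.1 j with hzf
  have hzfj₀ : zf j₀ = w.1 j₀ := by
    rw [hzf]
    simp only [hj₀S, ne_eq, not_true_eq_false]
    simp
  have hzfne : zf ≠ 0 := by
    intro hcon
    have := congrFun hcon j₀
    rw [hzfj₀] at this
    exact hj₀w this
  set z' : PP n := ⟨zf, hzfne⟩ with hz'
  have hz'w : SignLe z'.1 w.1 := by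
    intro j hj
    simp only [hz', hzf] at hj ⊢
    by_cases hc : (σ i).1 j ≠ 0 ∧ j ∉ U
    · rw [if_pos hc] at hj; exact absurd rfl hj
    · rw [if_neg hc]
  have hz'ne : z' ≠ σ i := by
    intro hcon
    have := congrFun (congrArg Subtype.val hcon) j₀
    simp only [hz'] at this
    rw [hzfj₀] at this
    rw [this] at hj₀w
    exact hj₀w hj₀S
  -- support of z'
  have hsupp : Chen.supp z'.1 = (Chen.supp w.1 \ S) ∪ U := by
    ext j
    simp only [Chen.mem_supp, hz', hzf, Finset.mem_union, Finset.mem_sdiff, Chen.mem_supp, hS]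
    by_cases hc : (σ i).1 j ≠ 0 ∧ j ∉ U
    · rw [if_pos hc]
      simp only [ne_eq, not_true_eq_false, false_iff]
      push_neg
      exact ⟨fun _ => hc.1, hc.2⟩
    · rw [if_neg hc]
      push_neg at hc
      constructor
      · intro hwj
        by_cases hU : j ∈ U
        · exact Or.inr hU
        · exact Or.inl ⟨hwj, fun hsj => absurd (hc hsj) hU⟩
      · intro hor
        rcases hor with ⟨hwj, -⟩ | hU
        · exact hwj
        · intro h0
          have : j ∈ S := hUS hU
          rw [hS, Chen.mem_supp] at this
          exact this (by
            have := (hσ.1 i isucc hilt).1 j this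
            rw [← this] at h0
            exact h0)
  have hdisj : Disjoint (Chen.supp w.1 \ S) U := by
    rw [Finset.disjoint_left]
    intro a ha haU
    rw [Finset.mem_sdiff] at ha
    exact ha.2 (hUS haU)
  have hz'card : (Chen.supp z'.1).card = (i : ℕ) + 1 := by
    rw [hsupp, Finset.card_union_of_disjoint hdisj, hWScard, hUcard]
    omega
  refine ⟨z', hz'ne, ?_, ?_⟩
  · -- SC of update
    intro p q hpq
    by_cases hp : p = i
    · subst hp
      have hq : q ≠ p := (ne_of_lt hpq).symm
      rw [Function.update_self, Function.update_of_ne hq]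
      have hqval : (isucc : ℕ) ≤ (q : ℕ) := by
        rw [Fin.lt_def] at hpq
        simp only [hisucc, Fin.val_mk]
        omega
      have hwq : SignLe w.1 (σ q).1 := SC_le hσ.1 (by rw [Fin.le_def]; exact hqval)
      constructor
      · exact Chen.sle_trans hz'w hwq
      · intro hcon
        have hcards := FFp_ssize hσ q
        rw [← hcon] at hcards
        rw [hz'card] at hcards
        rw [Fin.lt_def] at hpq
        omega
    · by_cases hq : q = i
      · subst hq
        rw [Function.update_of_ne hp, Function.update_self]
        have hple : p < q := hpq
        constructor
        · intro j hj
          have hjU : j ∈ U := hUfrom p hpq (Chen.mem_supp.2 hj)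
          have hjw : (σ p).1 j = w.1 j := by
            have : SignLe (σ p).1 w.1 := SC_le hσ.1 (le_of_lt (hpq.trans hilt))
            exact this j hj
          simp only [hz', hzf]
          rw [if_neg (by simp [hjU])]
          exact hjw
        · intro hcon
          have hcards := FFp_ssize hσ p
          rw [hcon, hz'card] at hcards
          rw [Fin.lt_def] at hpq
          omega
      · rw [Function.update_of_ne hp, Function.update_of_ne hq]
        exact hσ.1 p q hpq
  · -- InM of update
    intro j
    by_cases hj : j = i
    · rw [hj, Function.update_self]
      constructor
      · intro t ht
        have : z'.1 t = w.1 t := hz'w t ht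
        exact (hσ.2 isucc).1 t (by rw [← this]; exact ht)
      · simp only [hz', hzf]
        by_cases hc : (σ i).1 ⟨m, hmn⟩ ≠ 0 ∧ (⟨m, hmn⟩ : Fin n) ∉ U
        · rw [if_pos hc]; exact st_zero_ne_neg
        · rw [if_neg hc]; exact (hσ.2 isucc).2
    · rw [Function.update_of_ne hj]
      exact hσ.2 j

end Chunk7
section Chunk8
variable {n m : ℕ} {hmn : m < n}

lemma st_pos_of_ne {a : SignType} (h0 : a ≠ 0) (hn : a ≠ SignType.neg) : a = SignType.pos := by
  revert h0 hn; revert a; decide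

lemma st_neg_ne_self : ∀ a : SignType, a ≠ 0 → -a ≠ a := by decide

lemma st_three : ∀ a b c : SignType, a ≠ 0 → b ≠ 0 → c ≠ 0 →
    a ≠ b → a ≠ c → b ≠ c → False := by decide

lemma ext_supp_full {σ : Fin (m+1) → PP n} {z : PP n}
    (h : FFp hmn (Function.update σ (Fin.last m) z)) : Chen.supp z.1 = Bset n (m+1) := by
  have := FFp_supp_last h
  rwa [Function.update_self] at this

lemma castSucc_ne_last {t : Fin m} : (Fin.castSucc t) ≠ Fin.last m := by
  intro hcon
  have := congrArg Fin.val hcon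
  simp only [Fin.coe_castSucc, Fin.val_last] at this
  exact absurd this (Nat.ne_of_lt t.isLt)

lemma castSucc_lt_last {t : Fin m} : (Fin.castSucc t) < Fin.last m := by
  rw [Fin.lt_def]
  simp only [Fin.coe_castSucc, Fin.val_last]
  exact t.isLt

lemma facet_last_nonequator {σ : Fin (m+1) → PP n} {z₁ : PP n}
    (h1 : FFp hmn (Function.update σ (Fin.last m) z₁))
    (hne : ¬ ∀ t : Fin m, InE m (σ ((Fin.last m).succAbove t))) :
    ∃ hm0 : 0 < m, (σ (Fin.castSucc ⟨m-1, by omega⟩)).1 ⟨m, hmn⟩ ≠ 0 := by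
  push_neg at hne
  obtain ⟨t, ht⟩ := hne
  rw [Fin.succAbove_last] at ht
  have hm0 : 0 < m := t.pos
  rw [InE] at ht
  push_neg at ht
  obtain ⟨j, hj1, hj2⟩ := ht
  have hInE : InE (m+1) (σ (Fin.castSucc t)) := by
    have := (h1.2 (Fin.castSucc t)).1
    rwa [Function.update_of_ne castSucc_ne_last] at this
  have hjm : (j : ℕ) = m := by
    have := hInE j hj1
    omega
  have hjeq : j = (⟨m, hmn⟩ : Fin n) := Fin.ext (by rw [hjm])
  refine ⟨hm0, ?_⟩
  have hle : Fin.castSucc t ≤ Fin.castSucc (⟨m-1, by omega⟩ : Fin m) := by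
    rw [Fin.le_def]
    simp only [Fin.coe_castSucc, Fin.val_mk]
    have := t.isLt
    omega
  have hsc : SignLe (σ (Fin.castSucc t)).1 (σ (Fin.castSucc ⟨m-1, by omega⟩)).1 := by
    rcases eq_or_lt_of_le hle with h | h
    · rw [h]; exact Chen.sle_refl _
    · have := h1.1 _ _ h
      rw [Function.update_of_ne castSucc_ne_last, Function.update_of_ne castSucc_ne_last] at this
      exact this.1
  rw [hjeq] at hj1
  rw [← hsc _ hj1]
  exact hj1

lemma ext_eq_equator {σ : Fin (m+1) → PP n}
    (heq : ∀ t : Fin m, InE m (σ ((Fin.last m).succAbove t)))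
    {z z' : PP n} (h : FFp hmn (Function.update σ (Fin.last m) z))
    (h' : FFp hmn (Function.update σ (Fin.last m) z')) : z = z' := by
  have hsz := ext_supp_full h
  have hsz' := ext_supp_full h'
  have hzero : ∀ {zz : PP n}, Chen.supp zz.1 = Bset n (m+1) → ∀ j : Fin n, ¬ (j : ℕ) < m+1 →
      zz.1 j = 0 := by
    intro zz hs j hj
    by_contra hc
    have : j ∈ Bset n (m+1) := hs ▸ Chen.mem_supp.2 hc
    simp only [Bset, mem_filter] at this
    exact hj this.2
  apply Subtype.ext
  funext j
  by_cases hjB : (j : ℕ) < m+1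
  · by_cases hjm : (j : ℕ) < m
    · have hm0 : 0 < m := by omega
      set tp : Fin m := ⟨m-1, by omega⟩ with htp
      set u : PP n := σ (Fin.castSucc tp) with hu
      have hInEu : InE m u := by
        have := heq tp
        rwa [Fin.succAbove_last] at this
      have hucard : (Chen.supp u.1).card = m := by
        have := FFp_ssize h (Fin.castSucc tp)
        rw [Function.update_of_ne castSucc_ne_last] at this
        rw [hu, this]
        simp only [Fin.coe_castSucc, htp, Fin.val_mk]
        omega
      have husupp : Chen.supp u.1 = Bset n m := by
        apply Finset.eq_of_subset_of_card_le (supp_subset_Bset hInEu)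
        rw [card_Bset (by omega), hucard]
      have huj : u.1 j ≠ 0 := by
        apply Chen.mem_supp.1
        rw [husupp]
        simp only [Bset, mem_filter, mem_univ, true_and]
        exact hjm
      have hlt : Fin.castSucc tp < Fin.last m := castSucc_lt_last
      have hsc : SignLe u.1 z.1 := by
        have := h.1 _ _ hlt
        rw [Function.update_of_ne castSucc_ne_last, Function.update_self] at this
        exact this.1
      have hsc' : SignLe u.1 z'.1 := by
        have := h'.1 _ _ hlt
        rw [Function.update_of_ne castSucc_ne_last, Function.update_self] at this
        exact this.1
      rw [← hsc j huj, ← hsc' j huj]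
    · -- j is the top coordinate
      have hz0 : z.1 j ≠ 0 := by
        apply Chen.mem_supp.1
        rw [hsz]
        simp only [Bset, mem_filter, mem_univ, true_and]
        exact hjB
      have hz'0 : z'.1 j ≠ 0 := by
        apply Chen.mem_supp.1
        rw [hsz']
        simp only [Bset, mem_filter, mem_univ, true_and]
        exact hjB
      have hjeq : j = (⟨m, hmn⟩ : Fin n) := Fin.ext (by simp only [Fin.val_mk]; omega)
      have hzn : z.1 j ≠ SignType.neg := by
        rw [hjeq]
        have := (h.2 (Fin.last m)).2
        rwa [Function.update_self] at this
      have hz'n : z'.1 j ≠ SignType.neg := by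
        rw [hjeq]
        have := (h'.2 (Fin.last m)).2
        rwa [Function.update_self] at this
      rw [st_pos_of_ne hz0 hzn, st_pos_of_ne hz'0 hz'n]
  · rw [hzero hsz j hjB, hzero hsz' j hjB]

lemma ext_at_most_two_last {σ : Fin (m+1) → PP n}
    (hne : ¬ ∀ t : Fin m, InE m (σ ((Fin.last m).succAbove t)))
    {z₁ z₂ z₃ : PP n}
    (h1 : FFp hmn (Function.update σ (Fin.last m) z₁))
    (h2 : FFp hmn (Function.update σ (Fin.last m) z₂))
    (h3 : FFp hmn (Function.update σ (Fin.last m) z₃))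
    (h12 : z₁ ≠ z₂) (h13 : z₁ ≠ z₃) (h23 : z₂ ≠ z₃) : False := by
  obtain ⟨hm0, humhat⟩ := facet_last_nonequator h1 hne
  set tp : Fin m := ⟨m-1, by omega⟩ with htp
  set u : PP n := σ (Fin.castSucc tp) with hu
  set U : Finset (Fin n) := Chen.supp u.1 with hU
  have hucard : U.card = m := by
    have := FFp_ssize h1 (Fin.castSucc tp)
    rw [Function.update_of_ne castSucc_ne_last] at this
    rw [hU, ← hu] at *
    rw [this]
    simp only [Fin.coe_castSucc, htp, Fin.val_mk]
    omega
  have hUB : U ⊆ Bset n (m+1) := by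
    apply supp_subset_Bset
    have := (h1.2 (Fin.castSucc tp)).1
    rwa [Function.update_of_ne castSucc_ne_last] at this
  have hmhatU : (⟨m, hmn⟩ : Fin n) ∈ U := Chen.mem_supp.2 humhat
  have hcard1 : (Bset n (m+1) \ U).card = 1 := by
    rw [Finset.card_sdiff_of_subset hUB, card_Bset hmn, hucard]
    omega
  obtain ⟨j₀, hj₀⟩ := Finset.card_eq_one.1 hcard1
  have rep : ∀ z : PP n, FFp hmn (Function.update σ (Fin.last m) z) →
      ∀ j : Fin n, j ≠ j₀ → z.1 j = (if j ∈ U then u.1 j else 0) := by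
    intro z hz j hj
    have hsz := ext_supp_full hz
    have hsc : SignLe u.1 z.1 := by
      have := hz.1 _ _ (castSucc_lt_last (t := tp))
      rw [Function.update_of_ne castSucc_ne_last, Function.update_self] at this
      exact this.1
    by_cases hjU : j ∈ U
    · rw [if_pos hjU]
      exact (hsc j (Chen.mem_supp.1 hjU)).symm
    · rw [if_neg hjU]
      by_contra hc
      have hjB : j ∈ Bset n (m+1) := hsz ▸ Chen.mem_supp.2 hc
      have : j ∈ Bset n (m+1) \ U := Finset.mem_sdiff.2 ⟨hjB, hjU⟩
      rw [hj₀] at this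
      exact hj (Finset.mem_singleton.1 this)
  have hdet : ∀ {za zb : PP n}, FFp hmn (Function.update σ (Fin.last m) za) →
      FFp hmn (Function.update σ (Fin.last m) zb) → za.1 j₀ = zb.1 j₀ → za = zb := by
    intro za zb hza hzb hj₀eq
    apply Subtype.ext
    funext j
    by_cases hj : j = j₀
    · rw [hj]; exact hj₀eq
    · rw [rep za hza j hj, rep zb hzb j hj]
  have hj₀B : j₀ ∈ Bset n (m+1) := by
    have : j₀ ∈ Bset n (m+1) \ U := by rw [hj₀]; exact Finset.mem_singleton_self j₀
    exact (Finset.mem_sdiff.1 this).1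
  have hval : ∀ z : PP n, FFp hmn (Function.update σ (Fin.last m) z) → z.1 j₀ ≠ 0 := by
    intro z hz
    apply Chen.mem_supp.1
    rw [ext_supp_full hz]
    exact hj₀B
  exact st_three (z₁.1 j₀) (z₂.1 j₀) (z₃.1 j₀) (hval z₁ h1) (hval z₂ h2) (hval z₃ h3)
    (fun h => h12 (hdet h1 h2 h)) (fun h => h13 (hdet h1 h3 h)) (fun h => h23 (hdet h2 h3 h))

end Chunk8
section Chunk9
variable {n m : ℕ} {hmn : m < n}

lemma ext_other_last {σ : Fin (m+1) → PP n} (hσ : FFp hmn σ)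
    (hne : ¬ ∀ t : Fin m, InE m (σ ((Fin.last m).succAbove t))) :
    ∃ z' : PP n, z' ≠ σ (Fin.last m) ∧ FFp hmn (Function.update σ (Fin.last m) z') := by
  have hσupd : FFp hmn (Function.update σ (Fin.last m) (σ (Fin.last m))) := by
    rwa [Function.update_eq_self]
  obtain ⟨hm0, humhat⟩ := facet_last_nonequator hσupd hne
  set tp : Fin m := ⟨m-1, by omega⟩ with htp
  set u : PP n := σ (Fin.castSucc tp) with hu
  set U : Finset (Fin n) := Chen.supp u.1 with hU
  set σL : PP n := σ (Fin.last m) with hσL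
  have hucard : U.card = m := by
    have h := FFp_ssize hσ (Fin.castSucc tp)
    rw [hU, hu, h]
    simp only [Fin.coe_castSucc, htp, Fin.val_mk]
    omega
  have hUB : U ⊆ Bset n (m+1) := supp_subset_Bset (hσ.2 (Fin.castSucc tp)).1
  have hmhatU : (⟨m, hmn⟩ : Fin n) ∈ U := Chen.mem_supp.2 humhat
  have hcard1 : (Bset n (m+1) \ U).card = 1 := by
    rw [Finset.card_sdiff_of_subset hUB, card_Bset hmn, hucard]
    omega
  obtain ⟨j₀, hj₀⟩ := Finset.card_eq_one.1 hcard1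
  have hj₀mem : j₀ ∈ Bset n (m+1) \ U := by rw [hj₀]; exact Finset.mem_singleton_self j₀
  rw [Finset.mem_sdiff] at hj₀mem
  have hj₀U : j₀ ∉ U := hj₀mem.2
  have hj₀mhat : j₀ ≠ (⟨m, hmn⟩ : Fin n) := fun h => hj₀U (h ▸ hmhatU)
  have hsuppL : Chen.supp σL.1 = Bset n (m+1) := FFp_supp_last hσ
  have hσLj₀ : σL.1 j₀ ≠ 0 := Chen.mem_supp.1 (hsuppL ▸ hj₀mem.1)
  set zf : Fin n → SignType := fun j => if j = j₀ then -(σL.1 j) else σL.1 j with hzf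
  have hzf0 : ∀ j, zf j = 0 ↔ σL.1 j = 0 := by
    intro j
    simp only [hzf]
    by_cases hj : j = j₀
    · rw [if_pos hj, Chen.st_neg_eq_zero]
    · rw [if_neg hj]
  have hzfne : zf ≠ 0 := by
    intro hcon
    exact hσLj₀ ((hzf0 j₀).1 (by rw [hcon]; rfl))
  set z' : PP n := ⟨zf, hzfne⟩ with hz'
  have hzsupp : Chen.supp z'.1 = Chen.supp σL.1 := by
    ext j
    simp only [Chen.mem_supp, hz']
    exact not_congr (hzf0 j)
  have hz'ne : z' ≠ σL := by
    intro hcon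
    have := congrFun (congrArg Subtype.val hcon) j₀
    simp only [hz', hzf, if_pos rfl] at this
    exact st_neg_ne_self (σL.1 j₀) hσLj₀ this
  refine ⟨z', hz'ne, ?_, ?_⟩
  · intro p q hpq
    by_cases hq : q = Fin.last m
    · have hp : p ≠ Fin.last m := by
        intro hcon
        rw [hcon, hq] at hpq
        exact lt_irrefl _ hpq
      rw [hq, Function.update_of_ne hp, Function.update_self]
      have hple : p ≤ Fin.castSucc tp := by
        rw [Fin.le_def]
        simp only [Fin.coe_castSucc, htp, Fin.val_mk]
        rw [hq, Fin.lt_def, Fin.val_last] at hpq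
        omega
      have hpU : Chen.supp (σ p).1 ⊆ U := by
        rcases eq_or_lt_of_le hple with h | h
        · rw [hU, hu, h]
        · exact Chen.supp_subset (hσ.1 _ _ h).1
      have hpL : SignLe (σ p).1 σL.1 := by
        rw [hσL]
        apply SC_le hσ.1
        rw [Fin.le_def, Fin.val_last]
        omega
      constructor
      · intro j hj
        have hjU : j ∈ U := hpU (Chen.mem_supp.2 hj)
        have hjj₀ : j ≠ j₀ := fun h => hj₀U (h ▸ hjU)
        simp only [hz', hzf]
        rw [if_neg hjj₀]
        exact hpL j hj
      · intro hcon
        have hc1 := FFp_ssize hσ p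
        rw [hcon] at hc1
        have hc2 : (Chen.supp z'.1).card = m + 1 := by
          rw [hzsupp, hsuppL, card_Bset hmn]
        rw [hc1] at hc2
        rw [hq, Fin.lt_def, Fin.val_last] at hpq
        omega
    · have hp : p ≠ Fin.last m := by
        intro hcon
        have h1 := Fin.lt_def.1 hpq
        rw [hcon, Fin.val_last] at h1
        have := q.isLt
        omega
      rw [Function.update_of_ne hp, Function.update_of_ne hq]
      exact hσ.1 p q hpq
  · intro j
    by_cases hj : j = Fin.last m
    · rw [hj, Function.update_self]
      constructor
      · intro t ht
        exact (hσ.2 (Fin.last m)).1 t (fun c => ht ((hzf0 t).2 c))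
      · simp only [hz', hzf]
        rw [if_neg (fun h => hj₀mhat h.symm)]
        exact (hσ.2 (Fin.last m)).2
    · rw [Function.update_of_ne hj]
      exact hσ.2 j

lemma ext_unique_other {σ : Fin (m+1) → PP n} {i : Fin (m+1)} (hσ : FFp hmn σ)
    (hne : ¬ ∀ t : Fin m, InE m (σ (i.succAbove t))) :
    ∃ z', z' ≠ σ i ∧ FFp hmn (Function.update σ i z') ∧
      ∀ z'', z'' ≠ σ i → FFp hmn (Function.update σ i z'') → z'' = z' := by
  have hσupd : FFp hmn (Function.update σ i (σ i)) := by rwa [Function.update_eq_self]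
  by_cases hi : (i : ℕ) < m
  · obtain ⟨z', hz'ne, hz'⟩ := ext_other_low hσ hi
    refine ⟨z', hz'ne, hz', ?_⟩
    intro z'' h1 h2
    by_contra hcon
    exact ext_at_most_two_low hi hz' h2 hσupd (fun h => hcon h.symm) hz'ne h1
  · have hil : i = Fin.last m := Fin.ext (by rw [Fin.val_last]; have := i.isLt; omega)
    subst hil
    obtain ⟨z', hz'ne, hz'⟩ := ext_other_last hσ hne
    refine ⟨z', hz'ne, hz', ?_⟩
    intro z'' h1 h2
    by_contra hcon
    exact ext_at_most_two_last hne hz' h2 hσupd (fun h => hcon h.symm) hz'ne h1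

lemma ext_eq_of_equator {σ : Fin (m+1) → PP n} {i : Fin (m+1)} (hσ : FFp hmn σ)
    (heq : ∀ t : Fin m, InE m (σ (i.succAbove t))) {z : PP n}
    (hz : FFp hmn (Function.update σ i z)) : z = σ i := by
  have hil : i = Fin.last m := eq_last_of_equator hσ heq
  subst hil
  exact ext_eq_equator heq hz (by rwa [Function.update_eq_self])

end Chunk9
section Chunk10
variable {n : ℕ}

instance {r : ℕ} (w : Fin r → ℤ) : Decidable (PAseq w) := by unfold PAseq; infer_instance

def negP (x : PP n) : PP n :=
  ⟨fun j => -(x.1 j), by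
    intro hcon
    apply x.2
    funext j
    have := congrFun hcon j
    simp only [Pi.zero_apply] at this ⊢
    exact (Chen.st_neg_eq_zero (x.1 j)).1 this⟩

lemma st_neg_inj : ∀ a b : SignType, -a = -b → a = b := by decide

lemma st_neg_neg : ∀ a : SignType, -(-a) = a := by decide

lemma negP_negP (x : PP n) : negP (negP x) = x := by
  apply Subtype.ext
  funext j
  simp only [negP, st_neg_neg]

lemma negP_inj {x y : PP n} (h : negP x = negP y) : x = y := by
  apply Subtype.ext
  funext j
  have := congrFun (congrArg Subtype.val h) j
  exact st_neg_inj _ _ this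

lemma negP_ne {x : PP n} : negP x ≠ x → True := fun _ => trivial

lemma sle_negP {x y : PP n} (h : SignLe x.1 y.1) : SignLe (negP x).1 (negP y).1 :=
  Chen.sle_neg h

lemma InE_negP {k : ℕ} {x : PP n} (h : InE k x) : InE k (negP x) := by
  intro j hj
  apply h j
  intro hc
  apply hj
  simp only [negP, hc]
  rfl

def Nset (lam : PP n → ℤ) (k : ℕ) : Finset (Fin k → PP n) :=
  univ.filter (fun c => SC c ∧ (∀ j, InE k (c j)) ∧ NAseq (fun p => lam (c p)))

lemma mem_Nset {lam : PP n → ℤ} {k : ℕ} {c : Fin k → PP n} :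
    c ∈ Nset lam k ↔ SC c ∧ (∀ j, InE k (c j)) ∧ NAseq (fun p => lam (c p)) := by
  simp [Nset]

variable {m : ℕ}

def PairsSet (lam : PP n → ℤ) (hmn : m < n) :
    Finset ((Fin (m+1) → PP n) × Fin (m+1)) :=
  univ.filter (fun z => FFp hmn z.1 ∧ NAseq (fun t => lam (z.1 (z.2.succAbove t))))

lemma mem_PairsSet {lam : PP n → ℤ} {hmn : m < n} {z : (Fin (m+1) → PP n) × Fin (m+1)} :
    z ∈ PairsSet lam hmn ↔ FFp hmn z.1 ∧ NAseq (fun t => lam (z.1 (z.2.succAbove t))) := by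
  simp [PairsSet]

def AltSet (lam : PP n → ℤ) (hmn : m < n) : Finset (Fin (m+1) → PP n) :=
  univ.filter (fun σ => FFp hmn σ ∧
    (NAseq (fun p => lam (σ p)) ∨ PAseq (fun p => lam (σ p))))

lemma mem_AltSet {lam : PP n → ℤ} {hmn : m < n} {σ : Fin (m+1) → PP n} :
    σ ∈ AltSet lam hmn ↔ FFp hmn σ ∧
      (NAseq (fun p => lam (σ p)) ∨ PAseq (fun p => lam (σ p))) := by
  simp [AltSet]

lemma facet_update_eq {σ : Fin (m+1) → PP n} {i : Fin (m+1)} (z : PP n) :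
    (Function.update σ i z) ∘ i.succAbove = σ ∘ i.succAbove := by
  funext t
  simp only [Function.comp]
  rw [Function.update_of_ne (Fin.succAbove_ne i t)]

lemma chain_v1 {lam : PP n → ℤ} (hbd : ∀ x, 1 ≤ |lam x| ∧ |lam x| ≤ (n : ℤ))
    {k : ℕ} (σ : Fin k → PP n) : ∀ p, (fun p => lam (σ p)) p ≠ 0 := by
  intro p h
  simp only [] at h
  have := (hbd (σ p)).1
  rw [h] at this
  simp at this

lemma chain_v2 {lam : PP n → ℤ}
    (hmono : ∀ x y : PP n, SignLe x.1 y.1 → (lam x = lam y ∨ |lam x| < |lam y|))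
    {k : ℕ} {σ : Fin k → PP n} (hσ : SC σ) :
    ∀ p q, p < q → (fun p => lam (σ p)) p = (fun p => lam (σ p)) q ∨
      |(fun p => lam (σ p)) p| < |(fun p => lam (σ p)) q| := by
  intro p q h
  exact hmono _ _ (hσ p q h).1

end Chunk10
section Chunk11
variable {n m : ℕ} {hmn : m < n}

lemma ext_three {σ : Fin (m+1) → PP n} {i : Fin (m+1)}
    (hne : ¬ ∀ t : Fin m, InE m (σ (i.succAbove t)))
    {z₁ z₂ z₃ : PP n}
    (h1 : FFp hmn (Function.update σ i z₁)) (h2 : FFp hmn (Function.update σ i z₂))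
    (h3 : FFp hmn (Function.update σ i z₃))
    (h12 : z₁ ≠ z₂) (h13 : z₁ ≠ z₃) (h23 : z₂ ≠ z₃) : False := by
  by_cases hi : (i : ℕ) < m
  · exact ext_at_most_two_low hi h1 h2 h3 h12 h13 h23
  · have hil : i = Fin.last m := Fin.ext (by rw [Fin.val_last]; have := i.isLt; omega)
    subst hil
    exact ext_at_most_two_last hne h1 h2 h3 h12 h13 h23

lemma eq_castSucc_of_lt_last {p : Fin (m+1)} (h : (p : ℕ) < m) :
    ∃ t : Fin m, p = Fin.castSucc t :=
  ⟨⟨(p : ℕ), h⟩, Fin.ext rfl⟩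

def topfun (hmn : m < n) (τ : Fin m → PP n) : Fin n → SignType :=
  fun j => if (j : ℕ) = m then SignType.pos
    else (if h : 0 < m then (τ ⟨m-1, Nat.sub_lt h Nat.one_pos⟩).1 j else 0)

lemma topfun_m (hmn : m < n) (τ : Fin m → PP n) : topfun hmn τ ⟨m, hmn⟩ = SignType.pos := by
  unfold topfun
  rw [if_pos rfl]

def topext (hmn : m < n) (τ : Fin m → PP n) : PP n :=
  ⟨topfun hmn τ, by
    intro hcon
    have h1 : topfun hmn τ ⟨m, hmn⟩ = 0 := by rw [hcon]; rfl
    rw [topfun_m] at h1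
    exact absurd h1 (by decide)⟩

lemma pairs_equator (lam : PP n → ℤ) (hmn : m < n) :
    (PairsSet lam hmn).card ≡ (Nset lam m).card [MOD 2] := by
  classical
  set g : (Fin (m+1) → PP n) × Fin (m+1) → (Fin (m+1) → PP n) × Fin (m+1) :=
    fun z => if h : ∃ z', z' ≠ z.1 z.2 ∧ FFp hmn (Function.update z.1 z.2 z') then
      (Function.update z.1 z.2 h.choose, z.2) else z with hgdef
  have hcond : ∀ z : (Fin (m+1) → PP n) × Fin (m+1), FFp hmn z.1 →
      ((∃ z', z' ≠ z.1 z.2 ∧ FFp hmn (Function.update z.1 z.2 z')) ↔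
        ¬ ∀ t : Fin m, InE m (z.1 (z.2.succAbove t))) := by
    intro z hz
    constructor
    · rintro ⟨z', hne, hF⟩ heq
      exact hne (ext_eq_of_equator hz heq hF)
    · intro hne
      obtain ⟨z', h1, h2, -⟩ := ext_unique_other hz hne
      exact ⟨z', h1, h2⟩
  have hfacet : ∀ (σ : Fin (m+1) → PP n) (i : Fin (m+1)) (y : PP n),
      (fun t => lam ((Function.update σ i y) (i.succAbove t))) =
        (fun t => lam (σ (i.succAbove t))) := by
    intro σ i y
    funext t
    rw [Function.update_of_ne (Fin.succAbove_ne i t)]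
  have hmem : ∀ z ∈ PairsSet lam hmn, g z ∈ PairsSet lam hmn := by
    intro z hz
    obtain ⟨hF, hNA⟩ := mem_PairsSet.1 hz
    by_cases hcnd : ∃ z', z' ≠ z.1 z.2 ∧ FFp hmn (Function.update z.1 z.2 z')
    · have hspec := hcnd.choose_spec
      rw [hgdef]
      simp only [dif_pos hcnd]
      rw [mem_PairsSet]
      refine ⟨hspec.2, ?_⟩
      rw [hfacet]
      exact hNA
    · rw [hgdef]
      simp only [dif_neg hcnd]
      exact hz
  have hinv : ∀ z ∈ PairsSet lam hmn, g (g z) = z := by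
    intro z hz
    obtain ⟨hF, hNA⟩ := mem_PairsSet.1 hz
    by_cases hcnd : ∃ z', z' ≠ z.1 z.2 ∧ FFp hmn (Function.update z.1 z.2 z')
    · have hspec := hcnd.choose_spec
      have hgz : g z = (Function.update z.1 z.2 hcnd.choose, z.2) := by
        rw [hgdef]; simp only [dif_pos hcnd]
      have hcnd2 : ∃ z'', z'' ≠ (Function.update z.1 z.2 hcnd.choose) z.2 ∧
          FFp hmn (Function.update (Function.update z.1 z.2 hcnd.choose) z.2 z'') := by
        refine ⟨z.1 z.2, ?_, ?_⟩
        · rw [Function.update_self]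
          exact fun h => hspec.1 h.symm
        · rw [Function.update_idem, Function.update_eq_self]
          exact hF
      have hch2 := hcnd2.choose_spec
      have hneq : ¬ ∀ t, InE m (z.1 (z.2.succAbove t)) := (hcond z hF).1 hcnd
      have hc2ne : hcnd2.choose ≠ hcnd.choose := by
        intro hcc
        exact hch2.1 (hcc.trans (Function.update_self z.2 hcnd.choose z.1).symm)
      have hch2F : FFp hmn (Function.update z.1 z.2 hcnd2.choose) := by
        have := hch2.2
        rwa [Function.update_idem] at this
      have hchoose2 : hcnd2.choose = z.1 z.2 := by
        by_contra hcc
        exact ext_three hneq hspec.2 hch2F (by rw [Function.update_eq_self]; exact hF)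
          (fun h => hc2ne h.symm) hspec.1 hcc
      rw [hgz, hgdef]
      simp only [dif_pos hcnd2]
      rw [hchoose2, Function.update_idem, Function.update_eq_self]
    · rw [hgdef]
      simp only [dif_neg hcnd]
  have hpar := invol_parity (PairsSet lam hmn) g hmem hinv
  have hfix : ∀ z ∈ PairsSet lam hmn,
      (g z = z ↔ ∀ t : Fin m, InE m (z.1 (z.2.succAbove t))) := by
    intro z hz
    obtain ⟨hF, hNA⟩ := mem_PairsSet.1 hz
    by_cases hcnd : ∃ z', z' ≠ z.1 z.2 ∧ FFp hmn (Function.update z.1 z.2 z')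
    · have hspec := hcnd.choose_spec
      constructor
      · intro hg
        exfalso
        rw [hgdef] at hg
        simp only [dif_pos hcnd] at hg
        have h1 : Function.update z.1 z.2 hcnd.choose = z.1 := congrArg Prod.fst hg
        have h2 : hcnd.choose = z.1 z.2 :=
          (Function.update_self z.2 hcnd.choose z.1).symm.trans (congrFun h1 z.2)
        exact hspec.1 h2
      · intro heq
        exact absurd ((hcond z hF).1 hcnd) (by simpa using heq)
    · constructor
      · intro _
        by_contra hne
        exact hcnd ((hcond z hF).2 hne)
      · intro _
        rw [hgdef]
        simp only [dif_neg hcnd]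
  have hbij : ((PairsSet lam hmn).filter (fun z => g z = z)).card = (Nset lam m).card := by
    apply Finset.card_bij (fun z _ => z.1 ∘ Fin.castSucc)
    · -- membership
      intro z hz
      rw [Finset.mem_filter] at hz
      obtain ⟨hzP, hzfix⟩ := hz
      obtain ⟨hF, hNA⟩ := mem_PairsSet.1 hzP
      have heq := (hfix z hzP).1 hzfix
      have hil : z.2 = Fin.last m := eq_last_of_equator hF heq
      rw [mem_Nset]
      refine ⟨?_, ?_, ?_⟩
      · intro p q hpq
        exact hF.1 _ _ (Fin.castSucc_lt_castSucc_iff.2 hpq)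
      · intro t
        have := heq t
        rwa [hil, Fin.succAbove_last] at this
      · have := hNA
        rw [hil] at this
        rw [Fin.succAbove_last] at this
        exact this
    · -- injectivity
      intro z₁ hz₁ z₂ hz₂ heqc
      rw [Finset.mem_filter] at hz₁ hz₂
      obtain ⟨hz₁P, hz₁fix⟩ := hz₁
      obtain ⟨hz₂P, hz₂fix⟩ := hz₂
      obtain ⟨hF₁, hNA₁⟩ := mem_PairsSet.1 hz₁P
      obtain ⟨hF₂, hNA₂⟩ := mem_PairsSet.1 hz₂P
      have heq₁ := (hfix z₁ hz₁P).1 hz₁fix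
      have heq₂ := (hfix z₂ hz₂P).1 hz₂fix
      have hil₁ : z₁.2 = Fin.last m := eq_last_of_equator hF₁ heq₁
      have hil₂ : z₂.2 = Fin.last m := eq_last_of_equator hF₂ heq₂
      have hupd : Function.update z₁.1 (Fin.last m) (z₂.1 (Fin.last m)) = z₂.1 := by
        funext j
        refine Fin.lastCases ?_ ?_ j
        · rw [Function.update_self]
        · intro t
          rw [Function.update_of_ne castSucc_ne_last]
          exact congrFun heqc t
      have heq₁' : ∀ t : Fin m, InE m (z₁.1 ((Fin.last m).succAbove t)) := by
        intro t
        have := heq₁ t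
        rwa [hil₁] at this
      have htop : z₂.1 (Fin.last m) = z₁.1 (Fin.last m) := by
        apply ext_eq_of_equator hF₁ ?_ (z := z₂.1 (Fin.last m)) ?_
        · rwa [← hil₁]
        · rw [hil₁] at heq₁
          rw [hupd]
          exact hF₂
      have hσeq : z₁.1 = z₂.1 := by
        rw [← hupd, htop, Function.update_eq_self]
      exact Prod.ext hσeq (by rw [hil₁, hil₂])
    · -- surjectivity
      intro τ hτ
      obtain ⟨hτSC, hτE, hτNA⟩ := mem_Nset.1 hτ
      set z : PP n := topext hmn τ with hzdef
      set σ : Fin (m+1) → PP n := Fin.snoc τ z with hσdef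
      have hσcast : ∀ t : Fin m, σ (Fin.castSucc t) = τ t := by
        intro t
        rw [hσdef]
        exact Fin.snoc_castSucc _ _ _
      have hσlast : σ (Fin.last m) = z := by
        rw [hσdef]
        exact Fin.snoc_last _ _
      have hzval : ∀ j : Fin n, (j : ℕ) < m →
          z.1 j = (if h : 0 < m then (τ ⟨m-1, Nat.sub_lt h Nat.one_pos⟩).1 j else 0) := by
        intro j hj
        show topfun hmn τ j = _
        unfold topfun
        rw [if_neg (by omega)]
      have hzm : z.1 ⟨m, hmn⟩ = SignType.pos := topfun_m hmn τ
      have hztail : ∀ j : Fin n, m < (j : ℕ) → z.1 j = 0 := by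
        intro j hj
        show topfun hmn τ j = 0
        unfold topfun
        rw [if_neg (by omega)]
        by_cases h0 : 0 < m
        · rw [dif_pos h0]
          by_contra hc
          have := hτE ⟨m-1, Nat.sub_lt h0 Nat.one_pos⟩ j hc
          omega
        · rw [dif_neg h0]
      have hsle : ∀ t : Fin m, SignLe (τ t).1 z.1 := by
        intro t j hj
        have hjm : (j : ℕ) < m := hτE t j hj
        rw [hzval j hjm, dif_pos t.pos]
        have hle : t ≤ (⟨m-1, Nat.sub_lt t.pos Nat.one_pos⟩ : Fin m) := by
          rw [Fin.le_def]
          simp only [Fin.val_mk]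
          have := t.isLt
          omega
        exact SC_le hτSC hle j hj
      have hne : ∀ t : Fin m, τ t ≠ z := by
        intro t hcon
        have h1 : (τ t).1 ⟨m, hmn⟩ = 0 := by
          by_contra hc
          have := hτE t _ hc
          simp only [Fin.val_mk] at this
          omega
        rw [hcon, hzm] at h1
        exact absurd h1 (by decide)
      have hσF : FFp hmn σ := by
        constructor
        · intro p q hpq
          induction q using Fin.lastCases with
          | last =>
            obtain ⟨t, rfl⟩ := eq_castSucc_of_lt_last (p := p)
              (by rw [Fin.lt_def, Fin.val_last] at hpq; exact hpq)
            rw [hσlast, hσcast]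
            exact ⟨hsle t, hne t⟩
          | cast t =>
            obtain ⟨s, rfl⟩ := eq_castSucc_of_lt_last (p := p)
              (by rw [Fin.lt_def, Fin.coe_castSucc] at hpq; have := t.isLt; omega)
            rw [hσcast, hσcast]
            exact hτSC s t (Fin.castSucc_lt_castSucc_iff.1 hpq)
        · intro j
          induction j using Fin.lastCases with
          | last =>
            rw [hσlast]
            constructor
            · intro t ht
              by_contra hc
              push_neg at hc
              exact (by rw [hztail t (by omega)] at ht; exact ht rfl : False)
            · rw [hzm]; decide
          | cast t =>
            rw [hσcast]
            constructor
            · exact fun j hj => by have := hτE t j hj; omega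
            · have h0 : (τ t).1 ⟨m, hmn⟩ = 0 := by
                by_contra hc
                have := hτE t _ hc
                simp only [Fin.val_mk] at this
                omega
              rw [h0]
              decide
      have hmemP : (σ, Fin.last m) ∈ PairsSet lam hmn := by
        rw [mem_PairsSet]
        refine ⟨hσF, ?_⟩
        have : (fun t => lam (σ ((Fin.last m).succAbove t))) = fun t => lam (τ t) := by
          funext t
          rw [Fin.succAbove_last, hσcast]
        rw [this]
        exact hτNA
      refine ⟨(σ, Fin.last m), ?_, ?_⟩
      · rw [Finset.mem_filter]
        refine ⟨hmemP, ?_⟩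
        rw [hfix _ hmemP]
        intro t
        show InE m (σ ((Fin.last m).succAbove t))
        rw [Fin.succAbove_last, hσcast]
        exact hτE t
      · funext t
        exact hσcast t
  rw [hbij] at hpar
  exact hpar

end Chunk11
section Chunk12
variable {n m : ℕ}

lemma pairs_alt (lam : PP n → ℤ) (hmn : m < n)
    (hbd : ∀ x : PP n, 1 ≤ |lam x| ∧ |lam x| ≤ (n : ℤ))
    (hmono : ∀ x y : PP n, SignLe x.1 y.1 → (lam x = lam y ∨ |lam x| < |lam y|)) :
    (PairsSet lam hmn).card ≡ (AltSet lam hmn).card [MOD 2] := by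
  classical
  set g : (Fin (m+1) → PP n) × Fin (m+1) → (Fin (m+1) → PP n) × Fin (m+1) :=
    fun z => if h : ∃ j, j ≠ z.2 ∧ NAseq (fun t => lam (z.1 (j.succAbove t))) then
      (z.1, h.choose) else z with hgdef
  have hmem : ∀ z ∈ PairsSet lam hmn, g z ∈ PairsSet lam hmn := by
    intro z hz
    obtain ⟨hF, hNA⟩ := mem_PairsSet.1 hz
    by_cases hcnd : ∃ j, j ≠ z.2 ∧ NAseq (fun t => lam (z.1 (j.succAbove t)))
    · have hspec := hcnd.choose_spec
      rw [hgdef]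
      simp only [dif_pos hcnd]
      exact mem_PairsSet.2 ⟨hF, hspec.2⟩
    · rw [hgdef]
      simp only [dif_neg hcnd]
      exact hz
  have hinv : ∀ z ∈ PairsSet lam hmn, g (g z) = z := by
    intro z hz
    obtain ⟨hF, hNA⟩ := mem_PairsSet.1 hz
    by_cases hcnd : ∃ j, j ≠ z.2 ∧ NAseq (fun t => lam (z.1 (j.succAbove t)))
    · have hspec := hcnd.choose_spec
      have hgz : g z = (z.1, hcnd.choose) := by rw [hgdef]; simp only [dif_pos hcnd]
      have hcnd2 : ∃ j, j ≠ (z.1, hcnd.choose).2 ∧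
          NAseq (fun t => lam ((z.1, hcnd.choose).1 (j.succAbove t))) :=
        ⟨z.2, fun h => hspec.1 h.symm, hNA⟩
      have hch2 := hcnd2.choose_spec
      have hchoose2 : hcnd2.choose = z.2 := by
        by_contra hcc
        exact three_del (v := fun p => lam (z.1 p)) (chain_v1 hbd z.1)
          (a := z.2) (b := hcnd.choose) (c := hcnd2.choose)
          hNA hspec.2 hch2.2
          (fun h => hspec.1 h.symm) (fun h => hcc h.symm) (fun h => hch2.1 h.symm)
      rw [hgz, hgdef]
      simp only [dif_pos hcnd2]
      rw [hchoose2]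
    · rw [hgdef]
      simp only [dif_neg hcnd]
  have hpar := invol_parity (PairsSet lam hmn) g hmem hinv
  have hfix : ∀ z ∈ PairsSet lam hmn,
      (g z = z ↔ ∀ j, NAseq (fun t => lam (z.1 (j.succAbove t))) → j = z.2) := by
    intro z hz
    by_cases hcnd : ∃ j, j ≠ z.2 ∧ NAseq (fun t => lam (z.1 (j.succAbove t)))
    · have hspec := hcnd.choose_spec
      apply iff_of_false
      · intro hg
        rw [hgdef] at hg
        simp only [dif_pos hcnd] at hg
        exact hspec.1 (congrArg Prod.snd hg)
      · intro huniq
        exact hspec.1 (huniq _ hspec.2)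
    · apply iff_of_true
      · rw [hgdef]; simp only [dif_neg hcnd]
      · intro j hj
        by_contra hne
        exact hcnd ⟨j, hne, hj⟩
  have hbij : ((PairsSet lam hmn).filter (fun z => g z = z)).card = (AltSet lam hmn).card := by
    apply Finset.card_bij (fun z _ => z.1)
    · intro z hz
      rw [Finset.mem_filter] at hz
      obtain ⟨hzP, hzfix⟩ := hz
      obtain ⟨hF, hNA⟩ := mem_PairsSet.1 hzP
      have huniq := (hfix z hzP).1 hzfix
      rw [mem_AltSet]
      refine ⟨hF, ?_⟩
      exact alt_of_unique (v := fun p => lam (z.1 p)) (chain_v1 hbd z.1)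
        (chain_v2 hmono hF.1) (i := z.2) hNA (fun j hj => huniq j hj)
    · intro z₁ hz₁ z₂ hz₂ heq
      rw [Finset.mem_filter] at hz₁ hz₂
      obtain ⟨hz₁P, hz₁fix⟩ := hz₁
      obtain ⟨hz₂P, hz₂fix⟩ := hz₂
      obtain ⟨hF₁, hNA₁⟩ := mem_PairsSet.1 hz₁P
      obtain ⟨hF₂, hNA₂⟩ := mem_PairsSet.1 hz₂P
      have huniq := (hfix z₁ hz₁P).1 hz₁fix
      have : z₂.2 = z₁.2 := by
        apply huniq
        rw [heq]
        exact hNA₂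
      exact Prod.ext heq this.symm
    · intro σ hσ
      obtain ⟨hF, halt⟩ := mem_AltSet.1 hσ
      rcases halt with hNA | hPA
      · refine ⟨(σ, Fin.last m), ?_, rfl⟩
        rw [Finset.mem_filter]
        have hmemP : (σ, Fin.last m) ∈ PairsSet lam hmn :=
          mem_PairsSet.2 ⟨hF, NAdel_of_NA hNA⟩
        refine ⟨hmemP, ?_⟩
        rw [hfix _ hmemP]
        intro j hj
        exact NA_uniq_of_NA (chain_v1 hbd σ) hNA hj
      · refine ⟨(σ, 0), ?_, rfl⟩
        rw [Finset.mem_filter]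
        have hmemP : (σ, (0 : Fin (m+1))) ∈ PairsSet lam hmn :=
          mem_PairsSet.2 ⟨hF, NAdel_of_PA hPA⟩
        refine ⟨hmemP, ?_⟩
        rw [hfix _ hmemP]
        intro j hj
        exact NA_uniq_of_PA (chain_v1 hbd σ) hPA hj
  rw [hbij] at hpar
  exact hpar

end Chunk12
section Chunk13
variable {n m : ℕ}

def negC {k : ℕ} (c : Fin k → PP n) : Fin k → PP n := fun p => negP (c p)

lemma neg_sign_flip {a : ℤ} (ha : a ≠ 0) {k : ℕ} (h : a < 0 ↔ Even k) : (-a < 0 ↔ Odd k) := by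
  rw [Nat.odd_iff]
  rw [Nat.even_iff] at h
  rcases lt_trichotomy a 0 with hh | hh | hh
  · exact iff_of_false (by omega) (by have := h.1 hh; omega)
  · exact absurd hh ha
  · refine iff_of_true (by omega) ?_
    have : ¬ (k % 2 = 0) := fun c => (by omega : ¬ a < 0) (h.2 c)
    omega

lemma neg_sign_flip' {a : ℤ} (ha : a ≠ 0) {k : ℕ} (h : a < 0 ↔ Odd k) : (-a < 0 ↔ Even k) := by
  rw [Nat.even_iff]
  rw [Nat.odd_iff] at h
  rcases lt_trichotomy a 0 with hh | hh | hh
  · exact iff_of_false (by omega) (by have := h.1 hh; omega)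
  · exact absurd hh ha
  · refine iff_of_true (by omega) ?_
    have : ¬ (k % 2 = 1) := fun c => (by omega : ¬ a < 0) (h.2 c)
    omega

lemma SC_negC {k : ℕ} {c : Fin k → PP n} (hc : SC c) : SC (negC c) := by
  intro p q hpq
  refine ⟨sle_negP (hc p q hpq).1, fun h => (hc p q hpq).2 (negP_inj h)⟩

lemma NA_of_PA_negC (lam : PP n → ℤ)
    (hbd : ∀ x : PP n, 1 ≤ |lam x| ∧ |lam x| ≤ (n : ℤ))
    (hanti : ∀ x : PP n, lam (negP x) = -lam x)
    {k : ℕ} {c : Fin k → PP n} (h : PAseq (fun p => lam (c p))) :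
    NAseq (fun p => lam (negC c p)) := by
  constructor
  · intro p q hpq
    have := h.1 p q hpq
    simp only [negC, hanti, abs_neg]
    exact this
  · intro p
    have h2 := h.2 p
    have ha := chain_v1 hbd c p
    simp only [negC, hanti]
    exact neg_sign_flip' ha h2

lemma PA_of_NA_negC (lam : PP n → ℤ)
    (hbd : ∀ x : PP n, 1 ≤ |lam x| ∧ |lam x| ≤ (n : ℤ))
    (hanti : ∀ x : PP n, lam (negP x) = -lam x)
    {k : ℕ} {c : Fin k → PP n} (h : NAseq (fun p => lam (c p))) :
    PAseq (fun p => lam (negC c p)) := by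
  constructor
  · intro p q hpq
    have := h.1 p q hpq
    simp only [negC, hanti, abs_neg]
    exact this
  · intro p
    have h2 := h.2 p
    have ha := chain_v1 hbd c p
    simp only [negC, hanti]
    exact neg_sign_flip ha h2

lemma InM_all_of_top (hmn : m < n) {c : Fin (m+1) → PP n} (hSC : SC c)
    (hE : ∀ j, InE (m+1) (c j)) (htop : (c (Fin.last m)).1 ⟨m, hmn⟩ ≠ SignType.neg) :
    ∀ j, InM m hmn (c j) := by
  intro j
  refine ⟨hE j, ?_⟩
  by_cases h0 : (c j).1 ⟨m, hmn⟩ = 0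
  · rw [h0]; decide
  · have := SC_le hSC (Fin.le_last j) _ h0
    rw [this]
    exact htop

lemma Nset_top_ne (lam : PP n → ℤ) (hmn : m < n) {c : Fin (m+1) → PP n} (hSC : SC c)
    (hE : ∀ j, InE (m+1) (c j)) : (c (Fin.last m)).1 ⟨m, hmn⟩ ≠ 0 := by
  have hsupp : Chen.supp (c (Fin.last m)).1 = Bset n (m+1) := by
    apply Finset.eq_of_subset_of_card_le (supp_subset_Bset (hE (Fin.last m)))
    rw [card_Bset hmn, ssize_full c hSC hE (Fin.last m), Fin.val_last]
  apply Chen.mem_supp.1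
  rw [hsupp]
  simp only [Bset, mem_filter, mem_univ, true_and, Fin.val_mk]
  omega

lemma alt_card (lam : PP n → ℤ) (hmn : m < n)
    (hbd : ∀ x : PP n, 1 ≤ |lam x| ∧ |lam x| ≤ (n : ℤ))
    (hanti : ∀ x : PP n, lam (negP x) = -lam x) :
    (Nset lam (m+1)).card = (AltSet lam hmn).card := by
  classical
  apply Finset.card_bij (fun c _ => if (∀ j, InM m hmn (c j)) then c else negC c)
  · intro c hc
    obtain ⟨hSC, hE, hNA⟩ := mem_Nset.1 hc
    by_cases hIn : ∀ j, InM m hmn (c j)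
    · rw [if_pos hIn]
      exact mem_AltSet.2 ⟨⟨hSC, hIn⟩, Or.inl hNA⟩
    · rw [if_neg hIn]
      have htopne : (c (Fin.last m)).1 ⟨m, hmn⟩ = SignType.neg := by
        by_contra hcc
        exact hIn (InM_all_of_top hmn hSC hE hcc)
      have hSCn : SC (negC c) := SC_negC hSC
      have hEn : ∀ j, InE (m+1) (negC c j) := fun j => InE_negP (hE j)
      have htopn : (negC c (Fin.last m)).1 ⟨m, hmn⟩ ≠ SignType.neg := by
        show -((c (Fin.last m)).1 ⟨m, hmn⟩) ≠ SignType.neg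
        rw [htopne]
        decide
      exact mem_AltSet.2 ⟨⟨hSCn, InM_all_of_top hmn hSCn hEn htopn⟩,
        Or.inr (PA_of_NA_negC lam hbd hanti hNA)⟩
  · intro c₁ hc₁ c₂ hc₂ heq
    obtain ⟨hSC₁, hE₁, hNA₁⟩ := mem_Nset.1 hc₁
    obtain ⟨hSC₂, hE₂, hNA₂⟩ := mem_Nset.1 hc₂
    have hkey : ∀ c₁ c₂ : Fin (m+1) → PP n, NAseq (fun p => lam (c₁ p)) →
        NAseq (fun p => lam (c₂ p)) → c₁ = negC c₂ → False := by
      intro d₁ d₂ h1 h2 hcon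
      have e1 := (h1.2 0).2 (by simp)
      have e2 := (h2.2 0).2 (by simp)
      have : lam (d₁ 0) = -lam (d₂ 0) := by
        rw [hcon]
        exact hanti (d₂ 0)
      simp only [] at e1 e2
      omega
    by_cases h1 : ∀ j, InM m hmn (c₁ j) <;> by_cases h2 : ∀ j, InM m hmn (c₂ j)
    · rw [if_pos h1, if_pos h2] at heq; exact heq
    · rw [if_pos h1, if_neg h2] at heq
      exact absurd heq (fun h => hkey c₁ c₂ hNA₁ hNA₂ h)
    · rw [if_neg h1, if_pos h2] at heq
      exact absurd heq.symm (fun h => hkey c₂ c₁ hNA₂ hNA₁ h)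
    · rw [if_neg h1, if_neg h2] at heq
      funext p
      exact negP_inj (congrFun heq p)
  · intro σ hσ
    obtain ⟨hF, halt⟩ := mem_AltSet.1 hσ
    rcases halt with hNA | hPA
    · refine ⟨σ, mem_Nset.2 ⟨hF.1, fun j => (hF.2 j).1, hNA⟩, ?_⟩
      rw [if_pos hF.2]
    · have hSCn : SC (negC σ) := SC_negC hF.1
      have hEn : ∀ j, InE (m+1) (negC σ j) := fun j => InE_negP ((hF.2 j).1)
      have hNAn : NAseq (fun p => lam (negC σ p)) := NA_of_PA_negC lam hbd hanti hPA
      refine ⟨negC σ, mem_Nset.2 ⟨hSCn, hEn, hNAn⟩, ?_⟩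
      have htopσ : (σ (Fin.last m)).1 ⟨m, hmn⟩ = SignType.pos :=
        st_pos_of_ne (Nset_top_ne lam hmn hF.1 (fun j => (hF.2 j).1)) ((hF.2 (Fin.last m)).2)
      have hnotIn : ¬ ∀ j, InM m hmn (negC σ j) := by
        intro hIn
        have := (hIn (Fin.last m)).2
        have hv : (negC σ (Fin.last m)).1 ⟨m, hmn⟩ = SignType.neg := by
          show -((σ (Fin.last m)).1 ⟨m, hmn⟩) = SignType.neg
          rw [htopσ]
          rfl
        exact this hv
      rw [if_neg hnotIn]
      funext p
      exact negP_negP (σ p)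

lemma step_modeq (lam : PP n → ℤ) (hmn : m < n)
    (hbd : ∀ x : PP n, 1 ≤ |lam x| ∧ |lam x| ≤ (n : ℤ))
    (hanti : ∀ x : PP n, lam (negP x) = -lam x)
    (hmono : ∀ x y : PP n, SignLe x.1 y.1 → (lam x = lam y ∨ |lam x| < |lam y|)) :
    (Nset lam (m+1)).card ≡ (Nset lam m).card [MOD 2] := by
  have h1 := alt_card lam hmn hbd hanti
  have h2 := pairs_alt lam hmn hbd hmono
  have h3 := pairs_equator lam hmn
  rw [h1]
  exact (h2.symm.trans h3)

end Chunk13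
section Chunk14
variable {n : ℕ}

lemma Nset_zero (lam : PP n → ℤ) : (Nset lam 0).card = 1 := by
  rw [Finset.card_eq_one]
  refine ⟨fun p => p.elim0, ?_⟩
  ext c
  constructor
  · intro _
    rw [Finset.mem_singleton]
    funext p
    exact p.elim0
  · intro _
    exact mem_Nset.2 ⟨fun p => p.elim0, fun j => j.elim0, fun p => p.elim0, fun p => p.elim0⟩

lemma Nset_odd (lam : PP n → ℤ)
    (hbd : ∀ x : PP n, 1 ≤ |lam x| ∧ |lam x| ≤ (n : ℤ))
    (hanti : ∀ x : PP n, lam (negP x) = -lam x)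
    (hmono : ∀ x y : PP n, SignLe x.1 y.1 → (lam x = lam y ∨ |lam x| < |lam y|)) :
    ∀ k, k ≤ n → Odd (Nset lam k).card := by
  intro k
  induction k with
  | zero => intro _; rw [Nset_zero]; exact odd_one
  | succ k ih =>
    intro hk
    have hkn : k < n := hk
    have hstep := step_modeq lam hkn hbd hanti hmono
    have ho := ih (le_of_lt hkn)
    rw [Nat.odd_iff] at ho ⊢
    unfold Nat.ModEq at hstep
    omega

lemma fan (lam : PP n → ℤ)
    (hbd : ∀ x : PP n, 1 ≤ |lam x| ∧ |lam x| ≤ (n : ℤ))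
    (hanti : ∀ x : PP n, lam (negP x) = -lam x)
    (hmono : ∀ x y : PP n, SignLe x.1 y.1 → (lam x = lam y ∨ |lam x| < |lam y|)) :
    ∃ c : Fin n → PP n, (∀ i j : Fin n, i ≤ j → SignLe (c i).1 (c j).1) ∧
      ∀ i : Fin n, lam (c i) = (-1) ^ ((i : ℕ) + 1) * ((i : ℕ) + 1) := by
  have hodd := Nset_odd lam hbd hanti hmono n le_rfl
  have hne : (Nset lam n).Nonempty := by
    apply Finset.card_pos.1
    obtain ⟨k, hk⟩ := hodd
    omega
  obtain ⟨c, hc⟩ := hne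
  obtain ⟨hSC, hE, hNA⟩ := mem_Nset.1 hc
  refine ⟨c, ?_, ?_⟩
  · intro i j hij
    rcases eq_or_lt_of_le hij with h | h
    · rw [h]; exact Chen.sle_refl _
    · exact (hSC i j h).1
  · intro i
    have habs : ∀ p : Fin n, (lam (c p)).natAbs = (p : ℕ) + 1 := by
      apply pinch
      · intro p q hpq
        have h1 := hNA.1 p q hpq
        simp only [] at h1
        rw [Int.abs_eq_natAbs, Int.abs_eq_natAbs] at h1
        exact_mod_cast h1
      · intro p
        have := (hbd (c p)).1
        rw [Int.abs_eq_natAbs] at this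
        exact_mod_cast this
      · intro p
        have := (hbd (c p)).2
        rw [Int.abs_eq_natAbs] at this
        exact_mod_cast this
    have hsign := hNA.2 i
    simp only [] at hsign
    have habs' : |lam (c i)| = (((i : ℕ) : ℤ) + 1) := by
      rw [Int.abs_eq_natAbs, habs i]
      push_cast
      ring
    rcases Nat.even_or_odd (i : ℕ) with he | ho
    · have hlt : lam (c i) < 0 := hsign.2 he
      rw [abs_of_neg hlt] at habs'
      rw [Odd.neg_one_pow (Even.add_one he)]
      push_cast
      omega
    · have hge : ¬ lam (c i) < 0 := by
        intro hc2
        have := hsign.1 hc2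
        rw [Nat.even_iff] at this
        rw [Nat.odd_iff] at ho
        omega
      have hpos : 0 < lam (c i) := by
        have := chain_v1 hbd c i
        simp only [] at this
        omega
      rw [abs_of_pos hpos] at habs'
      rw [Even.neg_one_pow (Odd.add_one ho)]
      push_cast
      omega

end Chunk14
end Chen

/-- Chen's lemma. Let `λ` be an order-preserving `ℤ₂`-map from the nonzero sign
vectors of `{+,-,0}ⁿ` (ordered by `⪯`) to `Q_{n-1}` (the elements `{±1,…,±n}`
ordered by absolute value, with the involution `z ↦ -z`), and let `γ ∈ [n]`
(encoded as `γ : Fin n`, standing for `γ+1`) be such that whenever `x ≺ y`, at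
most one of `|λ(x)|`, `|λ(y)|` equals `γ`. Then there are chains
`x₁ ⪯ ⋯ ⪯ xₙ` and `y₁ ⪯ ⋯ ⪯ yₙ` with `λ(xᵢ) = (-1)ⁱ i` for all `i`,
`λ(yᵢ) = (-1)ⁱ i` for `i ≠ γ`, and `x_γ = -y_γ`. -/
theorem chen_lemma {n : ℕ} (hn : 0 < n)
    (lam : {x : Fin n → SignType // x ≠ 0} → ℤ)
    (hbd : ∀ x, 1 ≤ |lam x| ∧ |lam x| ≤ (n : ℤ))
    (hanti : ∀ x y : {x : Fin n → SignType // x ≠ 0},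
      (y : Fin n → SignType) = (fun i => -(x : Fin n → SignType) i) → lam y = -lam x)
    (hmono : ∀ x y : {x : Fin n → SignType // x ≠ 0},
      SignLe (x : Fin n → SignType) (y : Fin n → SignType) →
        (lam x = lam y ∨ |lam x| < |lam y|))
    (hcomp : ∀ x y : {x : Fin n → SignType // x ≠ 0},
      SignLe (x : Fin n → SignType) (y : Fin n → SignType) → lam x + lam y ≠ 0)
    (γ : Fin n)
    (hγ : ∀ x y : {x : Fin n → SignType // x ≠ 0},
      SignLe (x : Fin n → SignType) (y : Fin n → SignType) → x ≠ y →
        ¬(|lam x| = (γ : ℕ) + 1 ∧ |lam y| = (γ : ℕ) + 1)) :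
    ∃ c d : Fin n → {x : Fin n → SignType // x ≠ 0},
      (∀ i j : Fin n, i ≤ j → SignLe (c i : Fin n → SignType) (c j : Fin n → SignType)) ∧
      (∀ i j : Fin n, i ≤ j → SignLe (d i : Fin n → SignType) (d j : Fin n → SignType)) ∧
      (∀ i : Fin n, lam (c i) = (-1) ^ ((i : ℕ) + 1) * ((i : ℕ) + 1)) ∧
      (∀ i : Fin n, i ≠ γ → lam (d i) = (-1) ^ ((i : ℕ) + 1) * ((i : ℕ) + 1)) ∧
      (c γ : Fin n → SignType) = (fun i => -(d γ : Fin n → SignType) i) := by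
  classical
  set tg : ℤ := (-1) ^ ((γ : ℕ) + 1) * ((γ : ℕ) + 1) with htgdef
  have hanti' : ∀ x : Chen.PP n, lam (Chen.negP x) = -lam x := fun x => hanti x (Chen.negP x) rfl
  have habs_tg : |tg| = ((γ : ℕ) : ℤ) + 1 := by
    rw [htgdef, abs_mul, abs_pow, abs_neg, abs_one, one_pow, one_mul]
    rw [abs_of_nonneg (by positivity)]
  have htg0 : tg ≠ 0 := by
    intro h
    rw [h] at habs_tg
    simp at habs_tg
    omega
  have htgne : tg ≠ -tg := by
    intro h
    have : tg = 0 := by omega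
    exact htg0 this
  set Ins : Chen.PP n → Prop := fun x => ∃ d : Fin n → Chen.PP n,
    (∀ i j : Fin n, i ≤ j → SignLe (d i).1 (d j).1) ∧
    (∀ i : Fin n, i ≠ γ → lam (d i) = (-1) ^ ((i : ℕ) + 1) * ((i : ℕ) + 1)) ∧
    d γ = x with hInsdef
  set lam' : Chen.PP n → ℤ := fun x =>
    if lam x = tg then (if Ins x then -tg else tg)
    else if lam x = -tg then (if Ins (Chen.negP x) then tg else -tg)
    else lam x with hlamdef
  have habs' : ∀ x, |lam' x| = |lam x| := by
    intro x
    rw [hlamdef]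
    simp only []
    by_cases h1 : lam x = tg
    · rw [if_pos h1, h1]
      by_cases h2 : Ins x
      · rw [if_pos h2, abs_neg]
      · rw [if_neg h2]
    · rw [if_neg h1]
      by_cases h2 : lam x = -tg
      · rw [if_pos h2, h2, abs_neg]
        by_cases h3 : Ins (Chen.negP x)
        · rw [if_pos h3]
        · rw [if_neg h3, abs_neg]
      · rw [if_neg h2]
  have hlam'_eq : ∀ x, |lam x| ≠ ((γ : ℕ) : ℤ) + 1 → lam' x = lam x := by
    intro x h
    rw [hlamdef]
    simp only []
    rw [if_neg (fun hc => h (by rw [hc, habs_tg])),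
      if_neg (fun hc => h (by rw [hc, abs_neg, habs_tg]))]
  have hbd' : ∀ x, 1 ≤ |lam' x| ∧ |lam' x| ≤ (n : ℤ) := by
    intro x
    rw [habs']
    exact hbd x
  have hanti'' : ∀ x : Chen.PP n, lam' (Chen.negP x) = -lam' x := by
    intro x
    rw [hlamdef]
    simp only []
    by_cases h1 : lam x = tg
    · have hnx : lam (Chen.negP x) = -tg := by rw [hanti' x, h1]
      rw [if_neg (by rw [hnx]; exact fun h => htgne h.symm), if_pos hnx, if_pos h1,
        Chen.negP_negP]
      by_cases h2 : Ins x
      · rw [if_pos h2, if_pos h2, neg_neg]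
      · rw [if_neg h2, if_neg h2]
    · by_cases h2 : lam x = -tg
      · have hnx : lam (Chen.negP x) = tg := by rw [hanti' x, h2, neg_neg]
        rw [if_pos hnx, if_neg h1, if_pos h2]
        by_cases h3 : Ins (Chen.negP x)
        · rw [if_pos h3, if_pos h3]
        · rw [if_neg h3, if_neg h3, neg_neg]
      · have hn1 : lam (Chen.negP x) ≠ tg := by
          rw [hanti' x]
          intro h
          exact h2 (by omega)
        have hn2 : lam (Chen.negP x) ≠ -tg := by
          rw [hanti' x]
          intro h
          exact h1 (by omega)
        rw [if_neg hn1, if_neg hn2, if_neg h1, if_neg h2, hanti' x]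
  have key_eq : ∀ x y : Chen.PP n, SignLe x.1 y.1 → lam x = lam y → x ≠ y →
      |lam x| ≠ ((γ : ℕ) : ℤ) + 1 := by
    intro x y hxy heq hne hc
    apply hγ x y hxy hne
    constructor
    · exact hc
    · rw [← heq]; exact hc
  have hmono' : ∀ x y : Chen.PP n, SignLe x.1 y.1 → (lam' x = lam' y ∨ |lam' x| < |lam' y|) := by
    intro x y hxy
    rcases hmono x y hxy with heq | hlt
    · by_cases hne : x = y
      · left; rw [hne]
      · have h1 := key_eq x y hxy heq hne
        have h2 : |lam y| ≠ ((γ : ℕ) : ℤ) + 1 := by rw [← heq]; exact h1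
        left
        rw [hlam'_eq x h1, hlam'_eq y h2, heq]
    · right
      rw [habs', habs']
      exact hlt
  obtain ⟨c', hc'mono, hc'val⟩ := Chen.fan lam' hbd' hanti'' hmono'
  set z : Chen.PP n := c' γ with hzdef
  have hd_t : ∀ i : Fin n, i ≠ γ → lam (c' i) = (-1) ^ ((i : ℕ) + 1) * ((i : ℕ) + 1) := by
    intro i hi
    have habsne : |lam (c' i)| ≠ ((γ : ℕ) : ℤ) + 1 := by
      rw [← habs', hc'val i]
      have : |(-1 : ℤ) ^ ((i : ℕ) + 1) * ((i : ℕ) + 1)| = ((i : ℕ) : ℤ) + 1 := by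
        rw [abs_mul, abs_pow, abs_neg, abs_one, one_pow, one_mul,
          abs_of_nonneg (by positivity)]
      rw [this]
      intro hcon
      apply hi
      apply Fin.ext
      omega
    rw [← hlam'_eq (c' i) habsne, hc'val i]
  have hlamz' : lam' z = tg := hc'val γ
  have hInsz : Ins z := ⟨c', hc'mono, hd_t, rfl⟩
  have hz_neg : lam z = -tg ∧ Ins (Chen.negP z) := by
    by_cases h1 : lam z = tg
    · exfalso
      have : lam' z = -tg := by rw [hlamdef]; simp only []; rw [if_pos h1, if_pos hInsz]
      rw [hlamz'] at this
      exact htgne this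
    · by_cases h2 : lam z = -tg
      · refine ⟨h2, ?_⟩
        by_contra h3
        have : lam' z = -tg := by
          rw [hlamdef]; simp only []; rw [if_neg h1, if_pos h2, if_neg h3]
        rw [hlamz'] at this
        exact htgne this
      · exfalso
        have : lam' z = lam z := by rw [hlamdef]; simp only []; rw [if_neg h1, if_neg h2]
        rw [hlamz'] at this
        exact h1 this.symm
  obtain ⟨hlamz, hInsnz⟩ := hz_neg
  obtain ⟨cc, hccmono, hcct, hccγ⟩ := hInsnz
  have hccγval : lam (cc γ) = tg := by
    rw [hccγ, hanti' z, hlamz, neg_neg]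
  have hc_all : ∀ i : Fin n, lam (cc i) = (-1) ^ ((i : ℕ) + 1) * ((i : ℕ) + 1) := by
    intro i
    by_cases hi : i = γ
    · rw [hi, hccγval, htgdef]
    · exact hcct i hi
  refine ⟨cc, c', hccmono, hc'mono, hc_all, hd_t, ?_⟩
  rw [hccγ]
  rfl
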